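/- arXiv:1111.1837 — 6 statements merged into one kernel-verified Lean document; each statement's English description precedes it below -/
import Mathlib

section
/- The set {g^i h^j | 0 ≤ i, j ≤ n−1} is a k-basis of the Taft algebra H_n(q); in particular, H_n(q) has dimension n² over k. -/
open scoped TensorProduct

/-- The defining relations of the Taft algebra: `g^n = 1`, `h^n = 0`, `hg = q·gh`,
where `g` (resp. `h`) is the free generator indexed by `true` (resp. `false`). -/
inductive TaftRel (k : Type) [Field k] (q : k) (n : ℕ) :
    FreeAlgebra k Bool → FreeAlgebra k Bool → Prop
  | g_pow : TaftRel k q n (FreeAlgebra.ι k true ^ n) 1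
  | h_pow : TaftRel k q n (FreeAlgebra.ι k false ^ n) 0
  | h_g : TaftRel k q n (FreeAlgebra.ι k false * FreeAlgebra.ι k true)
      (q • (FreeAlgebra.ι k true * FreeAlgebra.ι k false))

/-- The Taft algebra `H_n(q)`: the `k`-algebra generated by `g, h` subject to
`g^n = 1`, `h^n = 0`, `hg = q·gh`. -/
abbrev TaftAlgebra (k : Type) [Field k] (q : k) (n : ℕ) : Type :=
  RingQuot (TaftRel k q n)

/-- The generator `g` of the Taft algebra. -/
noncomputable def taftG (k : Type) [Field k] (q : k) (n : ℕ) : TaftAlgebra k q n :=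
  RingQuot.mkAlgHom k (TaftRel k q n) (FreeAlgebra.ι k true)

/-- The generator `h` of the Taft algebra. -/
noncomputable def taftH (k : Type) [Field k] (q : k) (n : ℕ) : TaftAlgebra k q n :=
  RingQuot.mkAlgHom k (TaftRel k q n) (FreeAlgebra.ι k false)

namespace TaftAux

variable (k : Type) [Field k] (q : k) (n : ℕ) [NeZero n]

open Fin.NatCast

abbrev V : Type := (Fin n × Fin n) →₀ k

noncomputable def G : V k n →ₗ[k] V k n :=
  Finsupp.lmapDomain k k (fun p => (p.1 + 1, p.2))

noncomputable def Hsingle (p : Fin n × Fin n) : V k n :=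
  if h : (p.2 : ℕ) + 1 < n then
    q ^ (p.1 : ℕ) • Finsupp.single (p.1, (⟨(p.2 : ℕ) + 1, h⟩ : Fin n)) 1 else 0

noncomputable def H : V k n →ₗ[k] V k n :=
  Finsupp.lsum k (fun p => LinearMap.toSpanSingleton k _ (Hsingle k q n p))

lemma G_single (p : Fin n × Fin n) (c : k) :
    G k n (Finsupp.single p c) = Finsupp.single (p.1 + 1, p.2) c := by
  simp [G, Finsupp.mapDomain_single]

omit [NeZero n] in
lemma H_single (p : Fin n × Fin n) (c : k) :
    H k q n (Finsupp.single p c) = c • Hsingle k q n p := by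
  simp [H, LinearMap.toSpanSingleton_apply]

lemma Gpow_single (m : ℕ) (p : Fin n × Fin n) (c : k) :
    (G k n ^ m) (Finsupp.single p c) = Finsupp.single (p.1 + (m : Fin n), p.2) c := by
  induction m with
  | zero => simp
  | succ m ih =>
    rw [pow_succ', Module.End.mul_apply, ih, G_single]
    congr 2
    push_cast
    rw [add_assoc]

lemma Gpow_n : G k n ^ n = 1 := by
  apply Finsupp.lhom_ext
  intro p c
  rw [Gpow_single, Fin.natCast_self, add_zero, Module.End.one_apply]

lemma Hpow_single (m : ℕ) (i j : Fin n) :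
    (H k q n ^ m) (Finsupp.single (i, j) (1 : k)) =
      if h : (j : ℕ) + m < n then
        q ^ ((i : ℕ) * m) • Finsupp.single (i, (⟨(j : ℕ) + m, h⟩ : Fin n)) (1 : k)
      else 0 := by
  induction m generalizing j with
  | zero =>
    have hlt : (j : ℕ) + 0 < n := by simpa using j.isLt
    rw [pow_zero, Module.End.one_apply, dif_pos hlt]
    have h2 : (⟨(j : ℕ) + 0, hlt⟩ : Fin n) = j := by ext; simp
    rw [h2]
    simp
  | succ m ih =>
    rw [pow_succ, Module.End.mul_apply, H_single, one_smul, Hsingle]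
    by_cases h1 : (j : ℕ) + 1 < n
    · rw [dif_pos h1, map_smul, ih]
      by_cases h2 : (j : ℕ) + (m + 1) < n
      · have h3 : ((⟨(j : ℕ) + 1, h1⟩ : Fin n) : ℕ) + m < n := by
          show (j : ℕ) + 1 + m < n; omega
        rw [dif_pos h2, dif_pos h3, smul_smul, ← pow_add]
        have hc : (i : ℕ) + (i : ℕ) * m = (i : ℕ) * (m + 1) := by ring
        have hfin : (⟨((⟨(j : ℕ) + 1, h1⟩ : Fin n) : ℕ) + m, h3⟩ : Fin n)
            = ⟨(j : ℕ) + (m + 1), h2⟩ := by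
          apply Fin.ext; show (j : ℕ) + 1 + m = (j : ℕ) + (m + 1); omega
        rw [hc, hfin]
      · have h3 : ¬ (((⟨(j : ℕ) + 1, h1⟩ : Fin n) : ℕ) + m < n) := by simp; omega
        rw [dif_neg h2, dif_neg h3, smul_zero]
    · rw [dif_neg h1, map_zero, dif_neg (by omega)]

lemma Hpow_n : H k q n ^ n = 0 := by
  apply Finsupp.lhom_ext
  rintro ⟨i, j⟩ c
  have : Finsupp.single (i, j) c = c • Finsupp.single (i, j) (1 : k) := by
    rw [Finsupp.smul_single, smul_eq_mul, mul_one]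
  rw [this, map_smul, Hpow_single, dif_neg (by omega)]
  simp

omit [NeZero n] in
lemma qpow_mod (hq1 : q ^ n = 1) (a : ℕ) : q ^ (a % n) = q ^ a := by
  conv_rhs => rw [← Nat.div_add_mod a n]
  rw [pow_add, pow_mul, hq1, one_pow, one_mul]

lemma HG_rel (hn : 2 ≤ n) (hq1 : q ^ n = 1) :
    H k q n * G k n = q • (G k n * H k q n) := by
  apply Finsupp.lhom_ext
  rintro ⟨i, j⟩ c
  rw [Module.End.mul_apply, LinearMap.smul_apply, Module.End.mul_apply, G_single, H_single,
    H_single, Hsingle, Hsingle]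
  by_cases h1 : (j : ℕ) + 1 < n
  · rw [dif_pos h1, dif_pos h1, smul_smul, smul_smul, map_smul, G_single, smul_smul]
    congr 1
    have h1n : 1 % n = 1 := Nat.mod_eq_of_lt (by omega)
    have hv : ((i + 1 : Fin n) : ℕ) = ((i : ℕ) + 1) % n := by
      rw [Fin.val_add, Fin.val_one', h1n]
    rw [hv, qpow_mod k q n hq1, pow_succ]
    ring
  · rw [dif_neg h1, dif_neg h1]
    simp

/-- The representation of the free algebra. -/
noncomputable def f0 : FreeAlgebra k Bool →ₐ[k] Module.End k (V k n) :=
  FreeAlgebra.lift k (fun b => if b then G k n else H k q n)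

lemma f0_rel (hn : 2 ≤ n) (hq1 : q ^ n = 1) ⦃x y : FreeAlgebra k Bool⦄
    (r : TaftRel k q n x y) : f0 k q n x = f0 k q n y := by
  cases r with
  | g_pow =>
    simp only [map_pow, map_one, f0, FreeAlgebra.lift_ι_apply, if_true]
    exact Gpow_n k n
  | h_pow =>
    simp only [map_pow, map_zero, f0, FreeAlgebra.lift_ι_apply, Bool.false_eq_true, if_false]
    exact Hpow_n k q n
  | h_g =>
    simp only [map_mul, map_smul, f0, FreeAlgebra.lift_ι_apply, if_true,
      Bool.false_eq_true, if_false]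
    exact HG_rel k q n hn hq1

omit [NeZero n] in
lemma comm_pow {A : Type} [Ring A] [Algebra k A] (g h : A)
    (hgh : h * g = q • (g * h)) (a : ℕ) : h * g ^ a = q ^ a • (g ^ a * h) := by
  induction a with
  | zero => simp
  | succ a ih =>
    calc h * g ^ (a + 1) = (h * g) * g ^ a := by rw [pow_succ']; rw [mul_assoc]
      _ = (q • (g * h)) * g ^ a := by rw [hgh]
      _ = q • (g * (h * g ^ a)) := by rw [smul_mul_assoc, mul_assoc]
      _ = q • (g * (q ^ a • (g ^ a * h))) := by rw [ih]
      _ = (q * q ^ a) • (g * (g ^ a * h)) := by rw [mul_smul_comm, smul_smul]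
      _ = q ^ (a + 1) • (g ^ (a + 1) * h) := by
          rw [← pow_succ', ← mul_assoc, ← pow_succ']

omit [NeZero n] in
lemma comm_pow_pow {A : Type} [Ring A] [Algebra k A] (g h : A)
    (hgh : h * g = q • (g * h)) (b a : ℕ) :
    h ^ b * g ^ a = q ^ (a * b) • (g ^ a * h ^ b) := by
  induction b with
  | zero => simp
  | succ b ih =>
    calc h ^ (b + 1) * g ^ a = h ^ b * (h * g ^ a) := by rw [pow_succ, mul_assoc]
      _ = h ^ b * (q ^ a • (g ^ a * h)) := by rw [comm_pow k q g h hgh a]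
      _ = q ^ a • ((h ^ b * g ^ a) * h) := by rw [mul_smul_comm, mul_assoc]
      _ = q ^ a • ((q ^ (a * b) • (g ^ a * h ^ b)) * h) := by rw [ih]
      _ = (q ^ a * q ^ (a * b)) • (g ^ a * (h ^ b * h)) := by
          rw [smul_mul_assoc, smul_smul, mul_assoc]
      _ = q ^ (a * (b + 1)) • (g ^ a * h ^ (b + 1)) := by
          rw [← pow_add, ← pow_succ]
          congr 2
          ring

end TaftAux

open Fin.NatCast in
/-- The set `{g^i h^j | 0 ≤ i, j ≤ n−1}` is a `k`-basis of the Taft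
algebra `H_n(q)`; in particular `H_n(q)` has dimension `n²` over `k`. -/
theorem taft_algebra_basis (k : Type) [Field k] (n : ℕ) (hn : 2 ≤ n) (q : k)
    (hq : IsPrimitiveRoot q n) :
    LinearIndependent k
      (fun p : Fin n × Fin n => taftG k q n ^ (p.1 : ℕ) * taftH k q n ^ (p.2 : ℕ)) ∧
    Submodule.span k
      (Set.range fun p : Fin n × Fin n => taftG k q n ^ (p.1 : ℕ) * taftH k q n ^ (p.2 : ℕ)) = ⊤ ∧
    Module.finrank k (TaftAlgebra k q n) = n ^ 2 := by
  haveI : NeZero n := ⟨by omega⟩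
  have hq1 : q ^ n = 1 := hq.pow_eq_one
  set v : Fin n × Fin n → TaftAlgebra k q n :=
    fun p => taftG k q n ^ (p.1 : ℕ) * taftH k q n ^ (p.2 : ℕ) with hv
  -- the representation
  let Φ : TaftAlgebra k q n →ₐ[k] Module.End k (TaftAux.V k n) :=
    RingQuot.liftAlgHom k ⟨TaftAux.f0 k q n, TaftAux.f0_rel k q n hn hq1⟩
  have ΦG : Φ (taftG k q n) = TaftAux.G k n := by
    simp only [Φ, taftG, RingQuot.liftAlgHom_mkAlgHom_apply, TaftAux.f0,
      FreeAlgebra.lift_ι_apply, if_true]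
  have ΦH : Φ (taftH k q n) = TaftAux.H k q n := by
    simp only [Φ, taftH, RingQuot.liftAlgHom_mkAlgHom_apply, TaftAux.f0,
      FreeAlgebra.lift_ι_apply, Bool.false_eq_true, if_false]
  -- evaluation on the vacuum vector
  have happ : ∀ p : Fin n × Fin n,
      Φ (v p) (Finsupp.single ((0 : Fin n), (0 : Fin n)) (1 : k)) = Finsupp.single p 1 := by
    rintro ⟨i, j⟩
    have hcond : (((0 : Fin n)) : ℕ) + (j : ℕ) < n := by
      simpa using j.isLt
    rw [hv, map_mul, map_pow, map_pow, ΦG, ΦH, Module.End.mul_apply, TaftAux.Hpow_single,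
      dif_pos hcond, map_smul, TaftAux.Gpow_single]
    have e1 : (0 : Fin n) + ((i : ℕ) : Fin n) = i := by
      rw [Fin.cast_val_eq_self, zero_add]
    have e2 : (⟨(((0 : Fin n)) : ℕ) + (j : ℕ), hcond⟩ : Fin n) = j := by
      apply Fin.ext; simp
    rw [e1, e2]
    simp
  -- linear independence
  have li : LinearIndependent k v := by
    apply LinearIndependent.of_comp
      ((LinearMap.applyₗ (Finsupp.single ((0 : Fin n), (0 : Fin n)) (1 : k))).comp Φ.toLinearMap)
    have hcomp : (⇑((LinearMap.applyₗ
          (Finsupp.single ((0 : Fin n), (0 : Fin n)) (1 : k))).comp Φ.toLinearMap) ∘ v)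
        = fun p : Fin n × Fin n => Finsupp.single p (1 : k) := by
      funext p
      simpa using happ p
    rw [hcomp]
    have := (Finsupp.basisSingleOne (R := k) (ι := Fin n × Fin n)).linearIndependent
    rwa [Finsupp.coe_basisSingleOne] at this
  -- relations in the Taft algebra
  have gq : taftG k q n ^ n = 1 := by
    have := RingQuot.mkAlgHom_rel k (TaftRel.g_pow (k := k) (q := q) (n := n))
    rw [map_pow, map_one] at this
    exact this
  have hq0 : taftH k q n ^ n = 0 := by
    have := RingQuot.mkAlgHom_rel k (TaftRel.h_pow (k := k) (q := q) (n := n))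
    rw [map_pow, map_zero] at this
    exact this
  have hgr : taftH k q n * taftG k q n = q • (taftG k q n * taftH k q n) := by
    have := RingQuot.mkAlgHom_rel k (TaftRel.h_g (k := k) (q := q) (n := n))
    rw [map_mul, map_smul, map_mul] at this
    exact this
  have gpow_mod : ∀ m : ℕ, taftG k q n ^ m = taftG k q n ^ (m % n) := by
    intro m
    conv_lhs => rw [← Nat.div_add_mod m n]
    rw [pow_add, pow_mul, gq, one_pow, one_mul]
  -- spanning
  set S := Submodule.span k (Set.range v) with hS
  have hmem : ∀ p p' : Fin n × Fin n, v p * v p' ∈ S := by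
    rintro ⟨i, j⟩ ⟨a, b⟩
    have key : v (i, j) * v (a, b) =
        q ^ ((a : ℕ) * (j : ℕ)) •
          (taftG k q n ^ ((i : ℕ) + (a : ℕ)) * taftH k q n ^ ((j : ℕ) + (b : ℕ))) := by
      rw [hv]
      calc taftG k q n ^ (i : ℕ) * taftH k q n ^ (j : ℕ) *
            (taftG k q n ^ (a : ℕ) * taftH k q n ^ (b : ℕ))
          = taftG k q n ^ (i : ℕ) *
            ((taftH k q n ^ (j : ℕ) * taftG k q n ^ (a : ℕ)) * taftH k q n ^ (b : ℕ)) := by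
            rw [mul_assoc, mul_assoc]
        _ = taftG k q n ^ (i : ℕ) *
            ((q ^ ((a : ℕ) * (j : ℕ)) • (taftG k q n ^ (a : ℕ) * taftH k q n ^ (j : ℕ))) *
              taftH k q n ^ (b : ℕ)) := by
            rw [TaftAux.comm_pow_pow k q _ _ hgr]
        _ = q ^ ((a : ℕ) * (j : ℕ)) •
            (taftG k q n ^ ((i : ℕ) + (a : ℕ)) * taftH k q n ^ ((j : ℕ) + (b : ℕ))) := by
            rw [smul_mul_assoc, mul_smul_comm, pow_add, pow_add,
              mul_assoc (taftG k q n ^ (a : ℕ)), ← mul_assoc (taftG k q n ^ (i : ℕ))]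
    rw [key]
    by_cases hb : (j : ℕ) + (b : ℕ) < n
    · have hvv : taftG k q n ^ ((i : ℕ) + (a : ℕ)) * taftH k q n ^ ((j : ℕ) + (b : ℕ))
          = v (i + a, (⟨(j : ℕ) + (b : ℕ), hb⟩ : Fin n)) := by
        rw [hv, gpow_mod]
        simp [Fin.val_add]
      rw [hvv]
      exact S.smul_mem _ (Submodule.subset_span ⟨_, rfl⟩)
    · have hz : taftH k q n ^ ((j : ℕ) + (b : ℕ)) = 0 := by
        rw [show (j : ℕ) + (b : ℕ) = n + ((j : ℕ) + (b : ℕ) - n) by omega, pow_add, hq0,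
          zero_mul]
      rw [hz, mul_zero, smul_zero]
      exact S.zero_mem
  have hSS : ∀ x ∈ S, ∀ y ∈ S, x * y ∈ S := by
    intro x hx y hy
    have h1 : S * S ≤ S := by
      rw [hS, Submodule.span_mul_span]
      refine Submodule.span_le.2 ?_
      rintro z hz
      rw [Set.mem_mul] at hz
      obtain ⟨x', ⟨p, rfl⟩, y', ⟨p', rfl⟩, rfl⟩ := hz
      exact hmem p p'
    exact h1 (Submodule.mul_mem_mul hx hy)
  have hone : (1 : TaftAlgebra k q n) ∈ S := by
    have h00 : v ((0 : Fin n), (0 : Fin n)) = 1 := by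
      rw [hv]; simp
    exact h00 ▸ Submodule.subset_span ⟨_, rfl⟩
  have hGmem : taftG k q n ∈ S := by
    have h10 : v ((1 : Fin n), (0 : Fin n)) = taftG k q n := by
      rw [hv]
      simp [Fin.val_one', Nat.mod_eq_of_lt (by omega : 1 < n)]
    exact h10 ▸ Submodule.subset_span ⟨_, rfl⟩
  have hHmem : taftH k q n ∈ S := by
    have h01 : v ((0 : Fin n), (1 : Fin n)) = taftH k q n := by
      rw [hv]
      simp [Fin.val_one', Nat.mod_eq_of_lt (by omega : 1 < n)]
    exact h01 ▸ Submodule.subset_span ⟨_, rfl⟩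
  have htop : S = ⊤ := by
    rw [Submodule.eq_top_iff']
    intro x
    obtain ⟨y, rfl⟩ := RingQuot.mkAlgHom_surjective k (TaftRel k q n) x
    refine FreeAlgebra.induction k Bool ?_ ?_ ?_ ?_ y
    · intro r
      rw [AlgHom.commutes, Algebra.algebraMap_eq_smul_one]
      exact S.smul_mem r hone
    · rintro (_ | _)
      · exact hHmem
      · exact hGmem
    · intro a b ha hb
      rw [map_mul]
      exact hSS _ ha _ hb
    · intro a b ha hb
      rw [map_add]
      exact S.add_mem ha hb
  refine ⟨li, htop, ?_⟩
  have hbasis : Module.Basis (Fin n × Fin n) k (TaftAlgebra k q n) := Module.Basis.mk li htop.ge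
  rw [Module.finrank_eq_card_basis hbasis, Fintype.card_prod, Fintype.card_fin, pow_two]
end

section
/- Every finite-dimensional simple module over the Taft algebra H_n(q) is 1-dimensional and isomorphic to S_i for some i ∈ ℤ_n, and S_i ≅ S_j if and only if i ≡ j (mod n); hence there are exactly n isomorphism classes of simple H_n(q)-modules. -/
open scoped TensorProduct

/-- `V` is (a copy of) the standard `H_n(q)`-module `M(l,i)`:
it has a `k`-basis `v_0, …, v_{l-1}` with `g • v_j = q^{i-j} • v_j`,
`h • v_j = v_{j+1}` (and `h • v_{l-1} = 0`).  (This is the basis `v_1, …, v_l`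
of the paper re-indexed from `0`.) -/
def StdMSpec (k : Type) [Field k] (q : k) (n : ℕ) (l : ℕ) (i : ℤ)
    (V : Type) [AddCommGroup V] [Module k V] [Module (TaftAlgebra k q n) V] : Prop :=
  ∃ v : Module.Basis (Fin l) k V,
    (∀ j : Fin l, taftG k q n • v j = q ^ (i - ((j : ℕ) : ℤ)) • v j) ∧
    (∀ j : Fin l, taftH k q n • v j =
      if h : (j : ℕ) + 1 < l then v ⟨(j : ℕ) + 1, h⟩ else 0)

section Aux

variable {k : Type} [Field k] {q : k} {n : ℕ}

theorem taftG_pow : taftG k q n ^ n = 1 := by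
  have := RingQuot.mkAlgHom_rel k (TaftRel.g_pow (k := k) (q := q) (n := n))
  simpa [taftG, map_pow] using this

theorem taftH_pow : taftH k q n ^ n = 0 := by
  have := RingQuot.mkAlgHom_rel k (TaftRel.h_pow (k := k) (q := q) (n := n))
  simpa [taftH, map_pow] using this

theorem taftH_mul_G : taftH k q n * taftG k q n = q • (taftG k q n * taftH k q n) := by
  have := RingQuot.mkAlgHom_rel k (TaftRel.h_g (k := k) (q := q) (n := n))
  simpa [taftG, taftH, map_mul, map_smul] using this

theorem taft_adjoin_top : Algebra.adjoin k {taftG k q n, taftH k q n} = ⊤ := by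
  rw [eq_top_iff]
  rintro x -
  obtain ⟨y, rfl⟩ := RingQuot.mkAlgHom_surjective k (TaftRel k q n) x
  induction y using FreeAlgebra.induction with
  | grade0 c => simpa using Subalgebra.algebraMap_mem _ c
  | grade1 b =>
      cases b with
      | false => exact Algebra.subset_adjoin (Or.inr rfl)
      | true => exact Algebra.subset_adjoin (Or.inl rfl)
  | mul a b ha hb => rw [map_mul]; exact mul_mem ha hb
  | add a b ha hb => rw [map_add]; exact add_mem ha hb

/-- Induction over the Taft algebra on its generators. -/
theorem taft_induction {p : TaftAlgebra k q n → Prop}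
    (hg : p (taftG k q n)) (hh : p (taftH k q n))
    (halg : ∀ r : k, p (algebraMap k _ r))
    (hadd : ∀ a b, p a → p b → p (a + b))
    (hmul : ∀ a b, p a → p b → p (a * b)) (a : TaftAlgebra k q n) : p a := by
  have ha : a ∈ Algebra.adjoin k {taftG k q n, taftH k q n} := by
    rw [taft_adjoin_top]; trivial
  induction ha using Algebra.adjoin_induction with
  | mem x hx => rcases hx with rfl | rfl; exacts [hg, hh]
  | algebraMap r => exact halg r
  | add x y _ _ hx hy => exact hadd x y hx hy
  | mul x y _ _ hx hy => exact hmul x y hx hy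

end Aux
section Aux2

variable {k : Type} [Field k] {q : k} {n : ℕ}

/-- The 1-dimensional character of the Taft algebra sending `g ↦ lam`, `h ↦ 0`. -/
noncomputable def taftChar (q : k) (n : ℕ) (hn : n ≠ 0) (lam : k) (hl : lam ^ n = 1) :
    TaftAlgebra k q n →ₐ[k] k :=
  RingQuot.liftAlgHom k ⟨FreeAlgebra.lift k (fun b => if b then lam else 0), by
    rintro a b ⟨⟩ <;> simp [hl, zero_pow hn]⟩

@[simp] theorem taftChar_g (hn : n ≠ 0) (lam : k) (hl : lam ^ n = 1) :
    taftChar q n hn lam hl (taftG k q n) = lam := by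
  simp [taftChar, taftG, RingQuot.liftAlgHom_mkAlgHom_apply]

@[simp] theorem taftChar_h (hn : n ≠ 0) (lam : k) (hl : lam ^ n = 1) :
    taftChar q n hn lam hl (taftH k q n) = 0 := by
  simp [taftChar, taftH, RingQuot.liftAlgHom_mkAlgHom_apply]

theorem taftChar_congr (hn : n ≠ 0) (lam lam' : k) (hl : lam ^ n = 1) (hl' : lam' ^ n = 1)
    (h : lam = lam') : taftChar q n hn lam hl = taftChar q n hn lam' hl' := by
  subst h; rfl

/-- The twist automorphism `g ↦ q g`, `h ↦ h`. -/
noncomputable def taftSigma (hqn : q ^ n = 1) : TaftAlgebra k q n →ₐ[k] TaftAlgebra k q n :=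
  RingQuot.liftAlgHom k ⟨FreeAlgebra.lift k
      (fun b => if b then q • taftG k q n else taftH k q n), by
    rintro a b ⟨⟩
    · simp [smul_pow, hqn, taftG_pow]
    · simp [taftH_pow]
    · have e : (fun b => if b = true then q • taftG k q n else taftH k q n) false
          = taftH k q n := rfl
      have e' : (fun b => if b = true then q • taftG k q n else taftH k q n) true
          = q • taftG k q n := rfl
      simp [mul_smul_comm, smul_mul_assoc, taftH_mul_G, smul_smul]⟩

@[simp] theorem taftSigma_g (hqn : q ^ n = 1) :
    taftSigma hqn (taftG k q n) = q • taftG k q n := by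
  simp [taftSigma, taftG, RingQuot.liftAlgHom_mkAlgHom_apply]

@[simp] theorem taftSigma_h (hqn : q ^ n = 1) :
    taftSigma hqn (taftH k q n) = taftH k q n := by
  simp [taftSigma, taftH, RingQuot.liftAlgHom_mkAlgHom_apply]

theorem taftH_mul (hqn : q ^ n = 1) (a : TaftAlgebra k q n) :
    taftH k q n * a = taftSigma hqn a * taftH k q n := by
  induction a using taft_induction with
  | hg => simpa [smul_mul_assoc] using taftH_mul_G
  | hh => simp
  | halg r => simp [Algebra.commutes]
  | hadd a b ha hb => simp [mul_add, add_mul, ha, hb]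
  | hmul a b ha hb => rw [← mul_assoc, ha, mul_assoc, hb, map_mul, ← mul_assoc]

end Aux2

section Act

variable {k : Type} [Field k] {q : k} {n : ℕ}
variable {V : Type} [AddCommGroup V] [Module k V] [Module (TaftAlgebra k q n) V]
  [IsScalarTower k (TaftAlgebra k q n) V]

theorem q_zpow_pow (hq : IsPrimitiveRoot q n) (hn : n ≠ 0) (i : ℤ) : (q ^ i) ^ n = 1 := by
  have hq0 : q ≠ 0 := hq.ne_zero hn
  lift q to kˣ using hq0.isUnit with u hu
  rw [← Units.val_zpow_eq_zpow_val, ← Units.val_pow_eq_pow_val, ← zpow_natCast (u ^ i),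
    ← zpow_mul, mul_comm, zpow_mul, zpow_natCast]
  norm_cast
  rw [show u ^ n = 1 by ext; push_cast; exact hq.pow_eq_one, one_zpow, Units.val_one]

theorem smul_eq_taftChar (hn : n ≠ 0) (lam : k) (hl : lam ^ n = 1) (x : V)
    (hg : taftG k q n • x = lam • x) (hh : taftH k q n • x = 0) (a : TaftAlgebra k q n) :
    a • x = taftChar q n hn lam hl a • x := by
  induction a using taft_induction with
  | hg => rw [hg, taftChar_g]
  | hh => rw [hh, taftChar_h, zero_smul]
  | halg r => rw [algebraMap_smul, AlgHom.commutes]; simp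
  | hadd a b ha hb => rw [add_smul, ha, hb, map_add, add_smul]
  | hmul a b ha hb =>
      calc (a * b) • x = a • (b • x) := mul_smul _ _ _
        _ = a • (taftChar q n hn lam hl b • x) := by rw [hb]
        _ = taftChar q n hn lam hl b • (a • x) := (smul_comm _ _ _).symm
        _ = taftChar q n hn lam hl b • (taftChar q n hn lam hl a • x) := by rw [ha]
        _ = taftChar q n hn lam hl (a * b) • x := by
              rw [map_mul, mul_comm, mul_smul]

theorem StdMSpec.smul_eq (hn : n ≠ 0) {i : ℤ} (hl : (q ^ i) ^ n = 1)
    (hs : StdMSpec k q n 1 i V) (a : TaftAlgebra k q n) (x : V) :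
    a • x = taftChar q n hn (q ^ i) hl a • x := by
  obtain ⟨v, hg, hh⟩ := hs
  have hg0 : taftG k q n • v 0 = (q ^ i) • v 0 := by simpa using hg 0
  have hh0 : taftH k q n • v 0 = 0 := by simpa using hh 0
  have hx : ∃ c : k, x = c • v 0 := by
    refine ⟨v.repr x 0, ?_⟩
    have := v.sum_repr x
    rw [Fin.sum_univ_one] at this
    exact this.symm
  obtain ⟨c, rfl⟩ := hx
  rw [smul_comm, smul_eq_taftChar hn _ hl _ hg0 hh0 a, smul_comm]

end Act

section Parts

variable {k : Type} [Field k] {q : k} {n : ℕ}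

theorem exists_Si (hq : IsPrimitiveRoot q n) (hn : n ≠ 0) (i : ℤ) :
    ∃ (V : Type) (_ : AddCommGroup V) (_ : Module k V)
      (_ : Module (TaftAlgebra k q n) V) (_ : IsScalarTower k (TaftAlgebra k q n) V),
        StdMSpec k q n 1 i V := by
  set χ := taftChar q n hn (q ^ i) (q_zpow_pow hq hn i) with hχ
  letI M : Module (TaftAlgebra k q n) k := Module.compHom k χ.toRingHom
  have hsmul : ∀ (a : TaftAlgebra k q n) (x : k), a • x = χ a * x := fun a x => rfl
  haveI T : IsScalarTower k (TaftAlgebra k q n) k := ⟨fun c a x => by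
    rw [hsmul, hsmul, map_smul]; simp [mul_assoc]⟩
  refine ⟨k, inferInstance, inferInstance, M, T, Module.Basis.singleton (Fin 1) k,
    fun j => ?_, fun j => ?_⟩
  · rw [Module.Basis.singleton_apply, hsmul]
    have hj : ((j : ℕ) : ℤ) = 0 := by simp [Fin.val_eq_zero]
    rw [hj, sub_zero, taftChar_g, mul_one, smul_eq_mul, mul_one]
  · rw [Module.Basis.singleton_apply, hsmul, taftChar_h, zero_mul]
    have : ¬ ((j : ℕ) + 1 < 1) := by omega
    rw [dif_neg this]

theorem iso_iff (hq : IsPrimitiveRoot q n) (hn : n ≠ 0) (i j : ℤ) (V W : Type)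
    [AddCommGroup V] [Module k V] [Module (TaftAlgebra k q n) V]
    [IsScalarTower k (TaftAlgebra k q n) V] [AddCommGroup W] [Module k W]
    [Module (TaftAlgebra k q n) W] [IsScalarTower k (TaftAlgebra k q n) W]
    (hV : StdMSpec k q n 1 i V) (hW : StdMSpec k q n 1 j W) :
    Nonempty (V ≃ₗ[TaftAlgebra k q n] W) ↔ i ≡ j [ZMOD n] := by
  have hq0 : q ≠ 0 := hq.ne_zero hn
  have hli : ((q : k) ^ i) ^ n = 1 := q_zpow_pow hq hn i
  have hlj : ((q : k) ^ j) ^ n = 1 := q_zpow_pow hq hn j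
  constructor
  · rintro ⟨e⟩
    obtain ⟨v, hgv, hhv⟩ := hV
    have hg0 : taftG k q n • v 0 = (q ^ i) • v 0 := by simpa using hgv 0
    have hx0 : v 0 ≠ 0 := v.ne_zero 0
    have hex : e (v 0) ≠ 0 := by
      intro hh
      exact hx0 (e.injective (by rw [hh, map_zero]))
    have h1 : taftG k q n • e (v 0) = (q ^ i) • e (v 0) := by
      rw [← map_smul, hg0, ← algebraMap_smul (TaftAlgebra k q n) ((q:k) ^ i) (v 0),
        map_smul, algebraMap_smul]
    have h2 : taftG k q n • e (v 0) = (q ^ j) • e (v 0) := by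
      rw [hW.smul_eq hn hlj, taftChar_g]
    have h4 : ((q ^ i : k) - q ^ j) • e (v 0) = 0 := by
      rw [sub_smul, ← h1, ← h2, sub_self]
    have hqq : (q ^ i : k) = q ^ j := by
      rcases smul_eq_zero.mp h4 with h | h
      · exact sub_eq_zero.mp h
      · exact absurd h hex
    have hone : q ^ (i - j) = 1 := by
      rw [zpow_sub₀ hq0, hqq, div_self (zpow_ne_zero _ hq0)]
    have hd := (hq.zpow_eq_one_iff_dvd _).mp hone
    have hd' : (n : ℤ) ∣ j - i := by
      rw [show j - i = -(i - j) by ring]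
      exact Dvd.dvd.neg_right hd
    exact Int.modEq_iff_dvd.mpr hd'
  · intro hij
    have hd : (n : ℤ) ∣ j - i := Int.ModEq.dvd hij
    have hone : q ^ (j - i) = 1 := (hq.zpow_eq_one_iff_dvd _).mpr hd
    have hqq : (q ^ i : k) = q ^ j := by
      calc q ^ i = q ^ i * q ^ (j - i) := by rw [hone, mul_one]
        _ = q ^ (i + (j - i)) := (zpow_add₀ hq0 _ _).symm
        _ = q ^ j := by ring_nf
    obtain ⟨v, -, -⟩ := id hV
    obtain ⟨w, -, -⟩ := id hW
    let e0 : V ≃ₗ[k] W := v.equiv w (Equiv.refl _)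
    let f : V →ₗ[TaftAlgebra k q n] W :=
      { toFun := e0
        map_add' := fun x y => map_add e0 x y
        map_smul' := fun a x => by
          show e0 (a • x) = a • e0 x
          rw [hV.smul_eq hn hli a x, map_smul,
            taftChar_congr hn _ _ hli hlj hqq, ← hW.smul_eq hn hlj a (e0 x)] }
    exact ⟨LinearEquiv.ofBijective f e0.bijective⟩

end Parts

section Part2

variable {k : Type} [Field k] {q : k} {n : ℕ}
variable {V : Type} [AddCommGroup V] [Module k V] [Module (TaftAlgebra k q n) V]
  [IsScalarTower k (TaftAlgebra k q n) V]

/-- The action of an element of the Taft algebra as a `k`-linear endomorphism. -/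
noncomputable def actEnd (a : TaftAlgebra k q n) : Module.End k V :=
  { toFun := fun x => a • x
    map_add' := fun x y => smul_add _ _ _
    map_smul' := fun c x => smul_comm a c x }

theorem actEnd_pow (a : TaftAlgebra k q n) (m : ℕ) (x : V) :
    ((actEnd a : Module.End k V) ^ m) x = (a ^ m) • x := by
  induction m generalizing x with
  | zero => simp
  | succ m ih =>
      rw [pow_succ, Module.End.mul_apply, show (actEnd a : Module.End k V) x = a • x from rfl,
        ih (a • x), ← mul_smul, ← pow_succ]

theorem taft_simple_case (hq : IsPrimitiveRoot q n) (hn2 : 2 ≤ n)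
    (hs : IsSimpleModule (TaftAlgebra k q n) V) :
    Module.finrank k V = 1 ∧ ∃ i : ℕ, i < n ∧ StdMSpec k q n 1 (i : ℤ) V := by
  classical
  have hn : n ≠ 0 := by omega
  have npos : 0 < n := by omega
  haveI : NeZero n := ⟨hn⟩
  haveI := hs
  haveI : Nontrivial V := IsSimpleModule.nontrivial (TaftAlgebra k q n) V
  have hqn : q ^ n = 1 := hq.pow_eq_one
  -- Step 1: some nonzero vector is killed by `h`.
  have hker : ∃ x : V, x ≠ 0 ∧ taftH k q n • x = 0 := by
    by_contra hc
    push_neg at hc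
    have hinj : Function.Injective ⇑(actEnd (taftH k q n) : Module.End k V) := by
      intro x y hxy
      by_contra hne
      refine hc (x - y) (sub_ne_zero.mpr hne) ?_
      have h0 : taftH k q n • x = taftH k q n • y := hxy
      rw [smul_sub, h0, sub_self]
    have hinjn : ∀ m : ℕ, Function.Injective ⇑((actEnd (taftH k q n) : Module.End k V) ^ m) := by
      intro m
      induction m with
      | zero => intro x y hxy; simpa using hxy
      | succ m ih =>
          intro x y hxy
          rw [pow_succ, Module.End.mul_apply, Module.End.mul_apply] at hxy
          exact hinj (ih hxy)
    obtain ⟨x, hx⟩ := exists_ne (0 : V)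
    apply hx
    apply hinjn n
    rw [actEnd_pow, taftH_pow, zero_smul, map_zero]
  -- Step 2: `h` kills everything, since its kernel is a nonzero `H`-submodule.
  let p : Submodule (TaftAlgebra k q n) V :=
    { carrier := {x | taftH k q n • x = 0}
      add_mem' := fun {a b} ha hb => by
        simp only [Set.mem_setOf_eq] at *
        rw [smul_add, ha, hb, add_zero]
      zero_mem' := smul_zero _
      smul_mem' := fun a x hx => by
        simp only [Set.mem_setOf_eq] at *
        rw [← mul_smul, taftH_mul hqn a, mul_smul, hx, smul_zero] }
  have hHzero : ∀ x : V, taftH k q n • x = 0 := by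
    obtain ⟨x0, hx0, hx0h⟩ := hker
    have hptop : p = ⊤ := by
      rcases eq_bot_or_eq_top p with hb | ht
      · exfalso
        have : x0 ∈ p := hx0h
        rw [hb] at this
        exact hx0 (by simpa using this)
      · exact ht
    intro x
    have : x ∈ p := by rw [hptop]; trivial
    exact this
  -- Step 3: `g` has an eigenvector with eigenvalue an `n`-th root of unity.
  have hGn : (actEnd (taftG k q n) : Module.End k V) ^ n = 1 := by
    ext x
    rw [actEnd_pow, taftG_pow, one_smul, Module.End.one_apply]
  have key : ∀ s : Finset k,
      (∃ lam ∈ s, ¬ Function.Injective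
        ⇑((actEnd (taftG k q n) : Module.End k V) - algebraMap k _ lam)) ∨
      Function.Injective ⇑(Polynomial.aeval (actEnd (taftG k q n) : Module.End k V)
        (∏ lam ∈ s, (Polynomial.X - Polynomial.C lam))) := by
    intro s
    induction s using Finset.induction_on with
    | empty =>
        right
        rw [Finset.prod_empty, map_one]
        intro x y hxy
        simpa [Module.End.one_apply] using hxy
    | @insert a s has ih =>
        rcases ih with ⟨lam, hl, hni⟩ | hinj
        · exact Or.inl ⟨lam, Finset.mem_insert_of_mem hl, hni⟩
        · by_cases hA : Function.Injective
              ⇑((actEnd (taftG k q n) : Module.End k V) - algebraMap k _ a)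
          · right
            rw [Finset.prod_insert has, map_mul]
            intro x y hxy
            rw [Module.End.mul_apply, Module.End.mul_apply, map_sub, Polynomial.aeval_X,
              Polynomial.aeval_C] at hxy
            exact hinj (hA hxy)
          · exact Or.inl ⟨a, Finset.mem_insert_self a s, hA⟩
  have hfac : ∃ lam ∈ Polynomial.nthRootsFinset n (1 : k),
      ¬ Function.Injective ⇑((actEnd (taftG k q n) : Module.End k V) - algebraMap k _ lam) := by
    rcases key (Polynomial.nthRootsFinset n (1 : k)) with h | hinj
    · exact h
    · exfalso
      have h1 : Polynomial.aeval (actEnd (taftG k q n) : Module.End k V)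
          (∏ lam ∈ Polynomial.nthRootsFinset n (1 : k), (Polynomial.X - Polynomial.C lam)) = 0 := by
        rw [← Polynomial.X_pow_sub_one_eq_prod npos hq, map_sub, map_pow,
          Polynomial.aeval_X, map_one, hGn, sub_self]
      rw [h1] at hinj
      obtain ⟨x, hx⟩ := exists_ne (0 : V)
      exact hx (hinj (by simp))
  obtain ⟨lam, hlmem, hlni⟩ := hfac
  have hln : lam ^ n = 1 := (Polynomial.mem_nthRootsFinset npos (1 : k)).mp hlmem
  obtain ⟨a, b, hab, hne⟩ := Function.not_injective_iff.mp hlni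
  have heig : taftG k q n • (a - b) = lam • (a - b) := by
    have h5 : ((actEnd (taftG k q n) : Module.End k V) - algebraMap k _ lam) (a - b) = 0 := by
      rw [map_sub, hab, sub_self]
    rw [LinearMap.sub_apply, Module.algebraMap_end_apply] at h5
    have h6 : taftG k q n • (a - b) - lam • (a - b) = 0 := h5
    exact sub_eq_zero.mp h6
  set z := a - b with hz
  have hz0 : z ≠ 0 := sub_ne_zero.mpr hne
  have hchar := smul_eq_taftChar hn lam hln z heig (hHzero z)
  -- Step 4: the line spanned by the eigenvector is an `H`-submodule, hence everything.
  let p2 : Submodule (TaftAlgebra k q n) V :=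
    { carrier := (Submodule.span k {z} : Submodule k V)
      add_mem' := fun {x y} hx hy => Submodule.add_mem _ hx hy
      zero_mem' := Submodule.zero_mem _
      smul_mem' := fun c y hy => by
        have hy' : y ∈ Submodule.span k {z} := hy
        obtain ⟨d, rfl⟩ := Submodule.mem_span_singleton.mp hy'
        show c • (d • z) ∈ Submodule.span k {z}
        rw [smul_comm c d z, hchar c]
        exact Submodule.smul_mem _ _ (Submodule.smul_mem _ _
          (Submodule.mem_span_singleton_self z)) }
  have hall : ∀ y : V, ∃ c : k, c • z = y := by
    have hp2top : p2 = ⊤ := by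
      rcases eq_bot_or_eq_top p2 with hb | ht
      · exfalso
        have hzmem : z ∈ p2 := Submodule.mem_span_singleton_self z
        rw [hb] at hzmem
        exact hz0 (by simpa using hzmem)
      · exact ht
    intro y
    have : y ∈ p2 := by rw [hp2top]; trivial
    exact Submodule.mem_span_singleton.mp this
  refine ⟨finrank_eq_one z hz0 hall, ?_⟩
  obtain ⟨i, hi, hqi⟩ := hq.eq_pow_of_pow_eq_one hln
  refine ⟨i, hi, ?_⟩
  have hliz : LinearIndependent k (fun _ : Fin 1 => z) := LinearIndependent.of_subsingleton 0 hz0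
  have hsp : ⊤ ≤ Submodule.span k (Set.range (fun _ : Fin 1 => z)) := by
    intro y _
    obtain ⟨c, hc⟩ := hall y
    rw [Set.range_const]
    exact Submodule.mem_span_singleton.mpr ⟨c, hc⟩
  let v := Module.Basis.mk hliz hsp
  refine ⟨v, fun j => ?_, fun j => ?_⟩
  · have hj : ((j : ℕ) : ℤ) = 0 := by simp [Fin.val_eq_zero]
    rw [Module.Basis.mk_apply, hj, sub_zero, zpow_natCast, hqi, heig]
  · rw [Module.Basis.mk_apply, hHzero z]
    have : ¬ ((j : ℕ) + 1 < 1) := by omega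
    rw [dif_neg this]


/-- Every finite-dimensional simple `H_n(q)`-module is 1-dimensional and
isomorphic to `S_i` for some `i ∈ ℤ_n`; every `S_i` exists; and `S_i ≅ S_j` iff
`i ≡ j (mod n)`.  (Hence there are exactly `n` isomorphism classes of simple modules.) -/
theorem taft_simple_modules (k : Type) [Field k] (n : ℕ) (hn : 2 ≤ n) (q : k)
    (hq : IsPrimitiveRoot q n) :
    -- each `S_i` exists
    (∀ i : ℤ, ∃ (V : Type) (_ : AddCommGroup V) (_ : Module k V)
      (_ : Module (TaftAlgebra k q n) V) (_ : IsScalarTower k (TaftAlgebra k q n) V),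
        StdMSpec k q n 1 i V) ∧
    -- every finite-dimensional simple module is 1-dimensional, and is some `S_i` with `0 ≤ i < n`
    (∀ (V : Type) [AddCommGroup V] [Module k V] [Module (TaftAlgebra k q n) V]
      [IsScalarTower k (TaftAlgebra k q n) V] [Module.Finite k V],
        IsSimpleModule (TaftAlgebra k q n) V →
          Module.finrank k V = 1 ∧ ∃ i : ℕ, i < n ∧ StdMSpec k q n 1 (i : ℤ) V) ∧
    -- `S_i ≅ S_j` if and only if `i ≡ j (mod n)`
    (∀ (i j : ℤ) (V W : Type) [AddCommGroup V] [Module k V] [Module (TaftAlgebra k q n) V]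
      [IsScalarTower k (TaftAlgebra k q n) V] [AddCommGroup W] [Module k W]
      [Module (TaftAlgebra k q n) W] [IsScalarTower k (TaftAlgebra k q n) W],
        StdMSpec k q n 1 i V → StdMSpec k q n 1 j W →
          (Nonempty (V ≃ₗ[TaftAlgebra k q n] W) ↔ i ≡ j [ZMOD n])) := by
  have hn0 : n ≠ 0 := by omega
  refine ⟨fun i => exists_Si hq hn0 i, ?_, ?_⟩
  · intro V _ _ _ _ _ hs
    exact taft_simple_case hq hn hs
  · intro i j V W _ _ _ _ _ _ _ _ hV hW
    exact iso_iff hq hn0 i j V W hV hW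
end Part2
end

section
/- The Jacobson radical of the Taft algebra H_n(q) equals the two-sided ideal H_n(q)h generated by h; moreover J(H_n(q))^n = 0 while J(H_n(q))^{n−1} ≠ 0 (so the Loewy length of H_n(q) is n). -/
open scoped TensorProduct

namespace TaftProof

variable {k : Type} [Field k] {q : k} {n : ℕ}

lemma g_pow_n : taftG k q n ^ n = 1 := by
  have := RingQuot.mkAlgHom_rel k (TaftRel.g_pow (k := k) (q := q) (n := n))
  simpa [taftG, map_pow] using this

lemma h_pow_n : taftH k q n ^ n = 0 := by
  have := RingQuot.mkAlgHom_rel k (TaftRel.h_pow (k := k) (q := q) (n := n))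
  simpa [taftH, map_pow] using this

lemma hg_rel : taftH k q n * taftG k q n = q • (taftG k q n * taftH k q n) := by
  have := RingQuot.mkAlgHom_rel k (TaftRel.h_g (k := k) (q := q) (n := n))
  simpa [taftG, taftH, map_mul, map_smul] using this

lemma taft_induction {P : TaftAlgebra k q n → Prop}
    (halg : ∀ r : k, P (algebraMap k (TaftAlgebra k q n) r))
    (hg : P (taftG k q n)) (hh : P (taftH k q n))
    (hmul : ∀ x y, P x → P y → P (x * y))
    (hadd : ∀ x y, P x → P y → P (x + y)) :
    ∀ x : TaftAlgebra k q n, P x := by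
  intro x
  obtain ⟨w, rfl⟩ := RingQuot.mkAlgHom_surjective k (TaftRel k q n) x
  induction w using FreeAlgebra.induction with
  | grade0 r => simpa using halg r
  | grade1 b => cases b with
    | true => exact hg
    | false => exact hh
  | mul a b ha hb => rw [map_mul]; exact hmul _ _ ha hb
  | add a b ha hb => rw [map_add]; exact hadd _ _ ha hb

end TaftProof

namespace TaftProof
variable {k : Type} [Field k] {q : k} {n : ℕ}

lemma h_mul (b : TaftAlgebra k q n) : ∃ v, taftH k q n * b = v * taftH k q n := by
  induction b using taft_induction with
  | halg r => exact ⟨algebraMap k _ r, (Algebra.commutes r _).symm⟩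
  | hg => exact ⟨q • taftG k q n, by rw [hg_rel, smul_mul_assoc]⟩
  | hh => exact ⟨taftH k q n, rfl⟩
  | hmul x y hx hy =>
    obtain ⟨v, hv⟩ := hx; obtain ⟨w, hw⟩ := hy
    exact ⟨v * w, by rw [← mul_assoc, hv, mul_assoc, hw, ← mul_assoc]⟩
  | hadd x y hx hy =>
    obtain ⟨v, hv⟩ := hx; obtain ⟨w, hw⟩ := hy
    exact ⟨v + w, by rw [mul_add, hv, hw, add_mul]⟩

lemma mem_span_h {a : TaftAlgebra k q n} (ha : a ∈ Ideal.span {taftH k q n}) :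
    ∃ r, a = r * taftH k q n := by
  obtain ⟨r, hr⟩ := Submodule.mem_span_singleton.1 ha
  exact ⟨r, by simpa [smul_eq_mul] using hr.symm⟩

lemma span_h_mem {r : TaftAlgebra k q n} : r * taftH k q n ∈ Ideal.span {taftH k q n} :=
  Ideal.mul_mem_left _ r (Ideal.subset_span rfl)

lemma mul_right_mem {a : TaftAlgebra k q n} (ha : a ∈ Ideal.span {taftH k q n})
    (b : TaftAlgebra k q n) : a * b ∈ Ideal.span {taftH k q n} := by
  obtain ⟨r, rfl⟩ := mem_span_h ha
  obtain ⟨v, hv⟩ := h_mul (q := q) (n := n) b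
  have : r * taftH k q n * b = r * v * taftH k q n := by
    rw [mul_assoc, hv, ← mul_assoc]
  rw [this]; exact span_h_mem

lemma prod_span_h : ∀ l : List (TaftAlgebra k q n), (∀ x ∈ l, x ∈ Ideal.span {taftH k q n}) →
    ∃ w, l.prod = w * taftH k q n ^ l.length := by
  intro l
  induction l with
  | nil => exact fun _ => ⟨1, by simp⟩
  | cons x l ih =>
    intro hmem
    obtain ⟨w, hw⟩ := ih (fun y hy => hmem y (List.mem_cons_of_mem x hy))
    obtain ⟨r, hr⟩ := mem_span_h (hmem x List.mem_cons_self)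
    obtain ⟨v, hv⟩ := h_mul (q := q) (n := n) w
    refine ⟨r * v, ?_⟩
    rw [List.prod_cons, hw, hr, List.length_cons, mul_assoc r, ← mul_assoc (taftH k q n), hv,
      pow_succ']
    simp [mul_assoc]

lemma nilpotent_of_mem_span_h {z : TaftAlgebra k q n} (hz : z ∈ Ideal.span {taftH k q n}) :
    z ^ n = 0 := by
  obtain ⟨w, hw⟩ := prod_span_h (List.replicate n z) (by
    intro x hx; rw [List.eq_of_mem_replicate hx]; exact hz)
  rw [List.prod_replicate, List.length_replicate] at hw
  rw [hw, h_pow_n, mul_zero]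

lemma span_h_le_jacobson : Ideal.span {taftH k q n} ≤ (⊥ : Ideal (TaftAlgebra k q n)).jacobson := by
  intro x hx
  refine Ideal.mem_sInf.2 ?_
  rintro J ⟨-, hm⟩
  by_contra hxJ
  have htop : J ⊔ Ideal.span {x} = ⊤ := by
    refine hm.1.2 _ (lt_of_le_of_ne le_sup_left ?_)
    intro hEq
    exact hxJ (hEq ▸ (le_sup_right : Ideal.span {x} ≤ J ⊔ Ideal.span {x}) (Ideal.subset_span rfl))
  obtain ⟨m, hmJ, z, hzx, hmz⟩ := Submodule.mem_sup.1 ((Ideal.eq_top_iff_one _).1 htop)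
  obtain ⟨r, hr⟩ := Submodule.mem_span_singleton.1 hzx
  have hzI : z ∈ Ideal.span {taftH k q n} := by
    rw [← hr, smul_eq_mul]; exact Ideal.mul_mem_left _ r hx
  have hu : IsUnit m := by
    have hmu : m = 1 - z := by rw [← hmz]; simp
    rw [hmu]
    exact IsNilpotent.isUnit_one_sub ⟨n, nilpotent_of_mem_span_h hzI⟩
  exact hm.ne_top (J.eq_top_of_isUnit_mem hmJ hu)

lemma pow_mod_eq {M : Type} [Monoid M] {x : M} {n : ℕ} (hx : x ^ n = 1) (m : ℕ) :
    x ^ (m % n) = x ^ m := by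
  conv_rhs => rw [← Nat.div_add_mod m n, pow_add, pow_mul, hx, one_pow, one_mul]

end TaftProof

/-- The character of the Taft algebra sending `g ↦ u`, `h ↦ 0`. -/
noncomputable def charHom (k : Type) [Field k] (q : k) (n : ℕ) (hn : n ≠ 0) (u : k)
    (hu : u ^ n = 1) : TaftAlgebra k q n →ₐ[k] k :=
  RingQuot.liftAlgHom k ⟨FreeAlgebra.lift k (fun b => if b then u else 0), by
    rintro x y ⟨⟩ <;>
      simp [map_pow, map_mul, map_smul, FreeAlgebra.lift_ι_apply, hu, zero_pow hn]⟩

namespace TaftProof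

variable {k : Type} [Field k] {q : k} {n : ℕ}

lemma charHom_g (hn : n ≠ 0) (u : k) (hu : u ^ n = 1) :
    charHom k q n hn u hu (taftG k q n) = u := by
  rw [taftG, charHom, RingQuot.liftAlgHom_mkAlgHom_apply]
  simp [FreeAlgebra.lift_ι_apply]

lemma charHom_h (hn : n ≠ 0) (u : k) (hu : u ^ n = 1) :
    charHom k q n hn u hu (taftH k q n) = 0 := by
  rw [taftH, charHom, RingQuot.liftAlgHom_mkAlgHom_apply]
  simp [FreeAlgebra.lift_ι_apply]

lemma ker_charHom_isMaximal (hn : n ≠ 0) (u : k) (hu : u ^ n = 1) :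
    (RingHom.ker (charHom k q n hn u hu)).IsMaximal := by
  apply RingHom.ker_isMaximal_of_surjective
  intro c
  exact ⟨algebraMap k _ c, (charHom k q n hn u hu).commutes c⟩

end TaftProof

/-- `g^a` for `a : ZMod n`. -/
noncomputable def gz (k : Type) [Field k] (q : k) (n : ℕ) (a : ZMod n) : TaftAlgebra k q n :=
  taftG k q n ^ a.val

namespace TaftProof

variable {k : Type} [Field k] {q : k} {n : ℕ}

lemma gz_add [NeZero n] (a b : ZMod n) : gz k q n (a + b) = gz k q n a * gz k q n b := by
  rw [gz, gz, gz, ZMod.val_add, pow_mod_eq g_pow_n, pow_add]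

lemma charHom_gz (hn : n ≠ 0) (u : k) (hu : u ^ n = 1) (a : ZMod n) :
    charHom k q n hn u hu (gz k q n a) = u ^ a.val := by
  rw [gz, map_pow, charHom_g]

lemma conv_sum [NeZero n] (c c' : ZMod n → k) :
    (∑ a : ZMod n, c a • gz k q n a) * (∑ b : ZMod n, c' b • gz k q n b) =
      ∑ t : ZMod n, (∑ a : ZMod n, c a * c' (t - a)) • gz k q n t := by
  rw [Finset.sum_mul]
  have key : ∀ a : ZMod n, (c a • gz k q n a) * (∑ b : ZMod n, c' b • gz k q n b) =
      ∑ t : ZMod n, (c a * c' (t - a)) • gz k q n t := by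
    intro a
    rw [Finset.mul_sum]
    refine Fintype.sum_equiv (Equiv.addLeft a) _ _ ?_
    intro b
    rw [smul_mul_smul_comm, ← gz_add]
    simp
  calc ∑ a : ZMod n, (c a • gz k q n a) * (∑ b : ZMod n, c' b • gz k q n b)
      = ∑ a : ZMod n, ∑ t : ZMod n, (c a * c' (t - a)) • gz k q n t :=
        Finset.sum_congr rfl fun a _ => key a
    _ = ∑ t : ZMod n, ∑ a : ZMod n, (c a * c' (t - a)) • gz k q n t := Finset.sum_comm
    _ = ∑ t : ZMod n, (∑ a : ZMod n, c a * c' (t - a)) • gz k q n t :=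
        Finset.sum_congr rfl fun t _ => (Finset.sum_smul).symm

lemma decomp [NeZero n] (hn1 : 1 < n) (x : TaftAlgebra k q n) :
    ∃ (c : ZMod n → k) (y : TaftAlgebra k q n), y ∈ Ideal.span {taftH k q n} ∧
      x = (∑ a : ZMod n, c a • gz k q n a) + y := by
  haveI : Fact (1 < n) := ⟨hn1⟩
  induction x using taft_induction with
  | halg r =>
    refine ⟨fun a => if a = 0 then r else 0, 0, Submodule.zero_mem _, ?_⟩
    rw [add_zero]
    rw [show (∑ a : ZMod n, (if a = 0 then r else 0) • gz k q n a)
        = r • gz k q n 0 by simp [ite_smul]]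
    rw [gz, ZMod.val_zero, pow_zero, Algebra.algebraMap_eq_smul_one]
  | hg =>
    refine ⟨fun a => if a = 1 then 1 else 0, 0, Submodule.zero_mem _, ?_⟩
    rw [add_zero]
    rw [show (∑ a : ZMod n, (if a = 1 then (1:k) else 0) • gz k q n a)
        = (1:k) • gz k q n 1 by simp [ite_smul]]
    rw [gz, ZMod.val_one, pow_one, one_smul]
  | hh =>
    exact ⟨0, taftH k q n, Ideal.subset_span rfl, by simp⟩
  | hmul x y hx hy =>
    obtain ⟨c, y1, hy1, rfl⟩ := hx
    obtain ⟨c', y2, hy2, rfl⟩ := hy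
    refine ⟨fun t => ∑ a : ZMod n, c a * c' (t - a),
      (∑ a : ZMod n, c a • gz k q n a) * y2 + y1 * ((∑ a : ZMod n, c' a • gz k q n a) + y2),
      Submodule.add_mem _ (Ideal.mul_mem_left _ _ hy2)
        (mul_right_mem hy1 _), ?_⟩
    rw [add_mul, mul_add, conv_sum]
    abel
  | hadd x y hx hy =>
    obtain ⟨c, y1, hy1, rfl⟩ := hx
    obtain ⟨c', y2, hy2, rfl⟩ := hy
    refine ⟨c + c', y1 + y2, Submodule.add_mem _ hy1 hy2, ?_⟩
    simp only [Pi.add_apply, add_smul, Finset.sum_add_distrib]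
    abel

end TaftProof

namespace TaftProof

variable {k : Type} [Field k] {q : k} {n : ℕ}

lemma vandermonde_zero [NeZero n] (hq : IsPrimitiveRoot q n) (c : ZMod n → k)
    (hc : ∀ j : Fin n, ∑ a : ZMod n, c a * (q ^ (j : ℕ)) ^ a.val = 0) : c = 0 := by
  set v : Fin n → k := fun j => q ^ (j : ℕ) with hv
  have hdet : (Matrix.vandermonde v).det ≠ 0 := by
    rw [Matrix.det_vandermonde]
    refine Finset.prod_ne_zero_iff.2 fun i _ => Finset.prod_ne_zero_iff.2 fun j hj => ?_
    rw [Finset.mem_Ioi] at hj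
    refine sub_ne_zero_of_ne fun hEq => ?_
    have := hq.pow_inj j.isLt i.isLt hEq
    omega
  set c' : Fin n → k := fun i => c ((i : ℕ) : ZMod n) with hc'
  have hmv : (Matrix.vandermonde v).mulVec c' = 0 := by
    funext j
    simp only [Matrix.mulVec, dotProduct, Pi.zero_apply]
    rw [← hc j]
    refine Fintype.sum_equiv (Equiv.ofBijective (fun i : Fin n => ((i : ℕ) : ZMod n))
      ⟨fun ⦃i i'⦄ hii => Fin.ext (by
          simpa [ZMod.val_cast_of_lt i.isLt, ZMod.val_cast_of_lt i'.isLt]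
            using congrArg ZMod.val hii),
       fun a => ⟨⟨a.val, a.val_lt⟩, ZMod.natCast_zmod_val a⟩⟩) _ _ ?_
    intro i
    simp only [Matrix.vandermonde, Equiv.ofBijective_apply, Matrix.of_apply, c']
    show v j ^ (i : ℕ) * c ((i : ℕ) : ZMod n) = c ((i : ℕ) : ZMod n) * (q ^ (j : ℕ)) ^ (((i : ℕ) : ZMod n)).val
    rw [ZMod.val_cast_of_lt i.isLt, mul_comm]
  have hc0 : c' = 0 := Matrix.eq_zero_of_mulVec_eq_zero hdet hmv
  funext a
  have := congrFun hc0 ⟨a.val, a.val_lt⟩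
  simp only [c'] at this
  rwa [ZMod.natCast_zmod_val a] at this

end TaftProof

/-- The shift in the `g`-direction: the regular-representation action of `g`. -/
noncomputable def Gmap (k : Type) [Field k] (n : ℕ) :
    ((Fin n × ZMod n) → k) →ₗ[k] ((Fin n × ZMod n) → k) :=
  LinearMap.funLeft k k (fun p => (p.1, p.2 - 1))

/-- The regular-representation action of `h`. -/
noncomputable def Hmap (k : Type) [Field k] (q : k) (n : ℕ) :
    ((Fin n × ZMod n) → k) →ₗ[k] ((Fin n × ZMod n) → k) where
  toFun v p := if p.1.val = 0 then 0 else
    q ^ p.2.val * v (⟨p.1.val - 1, Nat.lt_of_le_of_lt (Nat.sub_le _ _) p.1.isLt⟩, p.2)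
  map_add' u v := by
    funext p
    by_cases hp : p.1.val = 0 <;> simp [hp, mul_add]
  map_smul' a v := by
    funext p
    by_cases hp : p.1.val = 0 <;> simp [hp, smul_eq_mul, mul_left_comm]

namespace TaftProof

variable {k : Type} [Field k] {q : k} {n : ℕ}

lemma Gmap_apply (v : (Fin n × ZMod n) → k) (p : Fin n × ZMod n) :
    Gmap k n v p = v (p.1, p.2 - 1) := rfl

lemma Hmap_apply (v : (Fin n × ZMod n) → k) (p : Fin n × ZMod n) :
    Hmap k q n v p = if p.1.val = 0 then 0 else
      q ^ p.2.val * v (⟨p.1.val - 1, Nat.lt_of_le_of_lt (Nat.sub_le _ _) p.1.isLt⟩, p.2) := rfl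

lemma Gmap_pow (m : ℕ) (v : (Fin n × ZMod n) → k) (p : Fin n × ZMod n) :
    ((Gmap k n : Module.End k ((Fin n × ZMod n) → k)) ^ m) v p = v (p.1, p.2 - (m : ZMod n)) := by
  induction m generalizing v p with
  | zero => simp
  | succ m ih =>
    rw [pow_succ', Module.End.mul_apply, Gmap_apply, ih]
    congr 1
    push_cast
    ring_nf

lemma Gmap_pow_n [NeZero n] :
    (Gmap k n : Module.End k ((Fin n × ZMod n) → k)) ^ n = 1 := by
  apply LinearMap.ext; intro v
  funext p
  rw [Gmap_pow, ZMod.natCast_self, sub_zero, Module.End.one_apply]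

lemma Hmap_pow_vanish (m : ℕ) (v : (Fin n × ZMod n) → k) (p : Fin n × ZMod n)
    (hp : p.1.val < m) :
    ((Hmap k q n : Module.End k ((Fin n × ZMod n) → k)) ^ m) v p = 0 := by
  induction m generalizing v p with
  | zero => omega
  | succ m ih =>
    rw [pow_succ', Module.End.mul_apply, Hmap_apply]
    by_cases h0 : p.1.val = 0
    · simp [h0]
    · rw [if_neg h0, ih _ _ (by simp; omega), mul_zero]

lemma Hmap_pow_n :
    (Hmap k q n : Module.End k ((Fin n × ZMod n) → k)) ^ n = 0 := by
  apply LinearMap.ext; intro v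
  funext p
  rw [Hmap_pow_vanish n v p p.1.isLt, LinearMap.zero_apply, Pi.zero_apply]

lemma q_pow_val_succ [NeZero n] (hn1 : 1 < n) (hq1 : q ^ n = 1) (a : ZMod n) :
    q ^ ((a - 1).val + 1) = q ^ a.val := by
  haveI : Fact (1 < n) := ⟨hn1⟩
  have : a = a - 1 + 1 := by ring
  conv_rhs => rw [this]
  rw [ZMod.val_add, ZMod.val_one, pow_mod_eq hq1]

lemma HG_rel [NeZero n] (hn1 : 1 < n) (hq1 : q ^ n = 1) :
    (Hmap k q n : Module.End k ((Fin n × ZMod n) → k)) * Gmap k n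
      = q • ((Gmap k n : Module.End k ((Fin n × ZMod n) → k)) * Hmap k q n) := by
  apply LinearMap.ext; intro v
  funext p
  simp only [Module.End.mul_apply, LinearMap.smul_apply, Pi.smul_apply, Gmap_apply, Hmap_apply,
    smul_eq_mul]
  by_cases h0 : p.1.val = 0
  · simp [h0]
  · rw [if_neg h0, if_neg h0, ← mul_assoc, ← pow_succ', q_pow_val_succ hn1 hq1]

/-- The left regular representation of the Taft algebra. -/
noncomputable def rep (k : Type) [Field k] (q : k) (n : ℕ) [NeZero n] (hn1 : 1 < n)
    (hq1 : q ^ n = 1) :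
    TaftAlgebra k q n →ₐ[k] Module.End k ((Fin n × ZMod n) → k) :=
  RingQuot.liftAlgHom k ⟨FreeAlgebra.lift k (fun b => if b then Gmap k n else Hmap k q n), by
    rintro x y ⟨⟩ <;>
      simp only [map_pow, map_mul, map_smul, map_one, map_zero, FreeAlgebra.lift_ι_apply,
        if_true, if_false, Bool.cond_true]
    · exact Gmap_pow_n
    · exact Hmap_pow_n
    · exact HG_rel hn1 hq1⟩

lemma rep_h [NeZero n] (hn1 : 1 < n) (hq1 : q ^ n = 1) :
    rep k q n hn1 hq1 (taftH k q n) = Hmap k q n := by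
  rw [taftH, rep, RingQuot.liftAlgHom_mkAlgHom_apply]
  simp [FreeAlgebra.lift_ι_apply]

lemma Hmap_pow_delta (m : ℕ) (p : Fin n × ZMod n) :
    ((Hmap k q n : Module.End k ((Fin n × ZMod n) → k)) ^ m)
        (fun p => if p.1.val = 0 ∧ p.2 = 0 then 1 else 0) p
      = if p.1.val = m ∧ p.2 = 0 then 1 else 0 := by
  induction m generalizing p with
  | zero => simp
  | succ m ih =>
    rw [pow_succ', Module.End.mul_apply, Hmap_apply]
    by_cases h0 : p.1.val = 0
    · rw [if_pos h0, eq_comm, if_neg (by omega)]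
    · rw [if_neg h0, ih]
      by_cases hc : p.1.val - 1 = m ∧ p.2 = 0
      · obtain ⟨hc1, hc2⟩ := hc
        rw [if_pos ⟨hc1, hc2⟩, if_pos ⟨by omega, hc2⟩, hc2]
        simp
      · have hne : ¬(p.1.val = m + 1 ∧ p.2 = 0) := by
          rintro ⟨hm, hz⟩; exact hc ⟨by omega, hz⟩
        rw [if_neg hc, mul_zero, if_neg hne]

lemma h_pow_pred_ne_zero [NeZero n] (hn1 : 1 < n) (hq1 : q ^ n = 1) :
    taftH k q n ^ (n - 1) ≠ 0 := by
  intro h0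
  have := congrArg (rep k q n hn1 hq1) h0
  rw [map_pow, map_zero, rep_h] at this
  have h2 := congrFun (congrFun (congrArg DFunLike.coe this)
    (fun p => if p.1.val = 0 ∧ p.2 = 0 then 1 else 0)) (⟨n - 1, by omega⟩, 0)
  rw [Hmap_pow_delta] at h2
  simp at h2

end TaftProof

namespace TaftProof

variable {k : Type} [Field k] {q : k} {n : ℕ}

lemma jacobson_le_span [NeZero n] (hn1 : 1 < n) (hq : IsPrimitiveRoot q n) :
    (⊥ : Ideal (TaftAlgebra k q n)).jacobson ≤ Ideal.span {taftH k q n} := by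
  intro x hx
  obtain ⟨c, y, hy, rfl⟩ := decomp (q := q) hn1 x
  obtain ⟨r, hr⟩ := mem_span_h hy
  have hc : ∀ j : Fin n, ∑ a : ZMod n, c a * (q ^ (j : ℕ)) ^ a.val = 0 := by
    intro j
    have hu : (q ^ (j : ℕ)) ^ n = 1 := by
      rw [← pow_mul, mul_comm, pow_mul, hq.pow_eq_one, one_pow]
    have hker : (∑ a : ZMod n, c a • gz k q n a) + y
        ∈ RingHom.ker (charHom k q n (NeZero.ne n) (q ^ (j : ℕ)) hu) :=
      Ideal.mem_sInf.1 hx ⟨bot_le, ker_charHom_isMaximal (NeZero.ne n) _ hu⟩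
    rw [RingHom.mem_ker] at hker
    rw [map_add, map_sum] at hker
    have hy0 : charHom k q n (NeZero.ne n) (q ^ (j : ℕ)) hu y = 0 := by
      rw [hr, map_mul, charHom_h, mul_zero]
    rw [hy0, add_zero] at hker
    rw [← hker]
    refine Finset.sum_congr rfl fun a _ => ?_
    rw [map_smul, charHom_gz, smul_eq_mul]
  have hc0 : c = 0 := vandermonde_zero hq c hc
  subst hc0
  simpa using hy

theorem taft_main (hn : 2 ≤ n) (hq : IsPrimitiveRoot q n) :
    (⊥ : Ideal (TaftAlgebra k q n)).jacobson = Ideal.span {taftH k q n} ∧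
    (∀ a ∈ Ideal.span {taftH k q n}, ∀ b : TaftAlgebra k q n,
      a * b ∈ Ideal.span {taftH k q n}) ∧
    (∀ f : Fin n → TaftAlgebra k q n,
      (∀ j, f j ∈ (⊥ : Ideal (TaftAlgebra k q n)).jacobson) → (List.ofFn f).prod = 0) ∧
    (∃ f : Fin (n - 1) → TaftAlgebra k q n,
      (∀ j, f j ∈ (⊥ : Ideal (TaftAlgebra k q n)).jacobson) ∧ (List.ofFn f).prod ≠ 0) := by
  haveI : NeZero n := ⟨by omega⟩
  have hn1 : 1 < n := hn
  have heq : (⊥ : Ideal (TaftAlgebra k q n)).jacobson = Ideal.span {taftH k q n} :=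
    le_antisymm (jacobson_le_span hn1 hq) span_h_le_jacobson
  refine ⟨heq, fun a ha b => mul_right_mem ha b, ?_, ?_⟩
  · intro f hf
    obtain ⟨w, hw⟩ := prod_span_h (List.ofFn f) (by
      intro x hx
      obtain ⟨j, rfl⟩ := List.mem_ofFn.1 hx
      exact heq ▸ hf j)
    rw [hw, List.length_ofFn, h_pow_n, mul_zero]
  · refine ⟨fun _ => taftH k q n, fun j => ?_, ?_⟩
    · rw [heq]
      exact Ideal.subset_span rfl
    · rw [List.ofFn_const, List.prod_replicate]
      exact h_pow_pred_ne_zero hn1 hq.pow_eq_one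

end TaftProof

/-- The Jacobson radical of `H_n(q)` equals the ideal generated by `h`
(which is two-sided, since `Hh = hH`); moreover `J^n = 0` while `J^{n-1} ≠ 0`,
i.e. every product of `n` elements of `J` vanishes but some product of `n-1` elements
does not (so the Loewy length of `H_n(q)` is `n`). -/
theorem taft_jacobson_radical (k : Type) [Field k] (n : ℕ) (hn : 2 ≤ n) (q : k)
    (hq : IsPrimitiveRoot q n) :
    (⊥ : Ideal (TaftAlgebra k q n)).jacobson = Ideal.span {taftH k q n} ∧
    (∀ a ∈ Ideal.span {taftH k q n}, ∀ b : TaftAlgebra k q n,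
      a * b ∈ Ideal.span {taftH k q n}) ∧
    (∀ f : Fin n → TaftAlgebra k q n,
      (∀ j, f j ∈ (⊥ : Ideal (TaftAlgebra k q n)).jacobson) → (List.ofFn f).prod = 0) ∧
    (∃ f : Fin (n - 1) → TaftAlgebra k q n,
      (∀ j, f j ∈ (⊥ : Ideal (TaftAlgebra k q n)).jacobson) ∧ (List.ofFn f).prod ≠ 0) := by
  exact TaftProof.taft_main hn hq
end

section
/- For every 1 ≤ l ≤ n and i ∈ ℤ, the H_n(q)-module M(l,i) is indecomposable and uniserial (its submodules form a chain, namely 0 ⊂ span(v_l) ⊂ span(v_{l−1}, v_l) ⊂ … ⊂ M(l,i)). -/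
open scoped TensorProduct

/-- For `1 ≤ l ≤ n` and `i ∈ ℤ`, the module `M(l,i)` is indecomposable
and uniserial: its submodules form a chain, namely
`0 ⊂ span(v_l) ⊂ span(v_{l−1}, v_l) ⊂ … ⊂ M(l,i)`. -/
theorem taft_M_indecomposable_uniserial (k : Type) [Field k] (n : ℕ) (hn : 2 ≤ n) (q : k)
    (hq : IsPrimitiveRoot q n) (l : ℕ) (hl1 : 1 ≤ l) (hln : l ≤ n) (i : ℤ)
    (V : Type) [AddCommGroup V] [Module k V] [Module (TaftAlgebra k q n) V]
    [IsScalarTower k (TaftAlgebra k q n) V]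
    (v : Module.Basis (Fin l) k V)
    (hgv : ∀ j : Fin l, taftG k q n • v j = q ^ (i - ((j : ℕ) : ℤ)) • v j)
    (hhv : ∀ j : Fin l, taftH k q n • v j =
      if h : (j : ℕ) + 1 < l then v ⟨(j : ℕ) + 1, h⟩ else 0) :
    -- `M(l,i)` is nonzero and indecomposable
    ((⊥ : Submodule (TaftAlgebra k q n) V) ≠ ⊤ ∧
      ∀ W U : Submodule (TaftAlgebra k q n) V, IsCompl W U → W = ⊥ ∨ U = ⊥) ∧
    -- the submodules form a chain
    (∀ W U : Submodule (TaftAlgebra k q n) V, W ≤ U ∨ U ≤ W) ∧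
    -- and every submodule is the span of the last `m` basis vectors, for some `m ≤ l`
    (∀ W : Submodule (TaftAlgebra k q n) V, ∃ m ≤ l,
      ((W : Submodule (TaftAlgebra k q n) V) : Set V)
        = ((Submodule.span k (v '' {j : Fin l | l - m ≤ (j : ℕ)}) : Submodule k V) : Set V)) := by
  classical
  have hq0 : q ≠ 0 := hq.ne_zero (by omega)
  set lam : Fin l → k := fun j => q ^ (i - ((j : ℕ) : ℤ)) with hlamdef
  -- eigenvalues are pairwise distinct
  have hlaminj : Function.Injective lam := by
    intro j1 j2 hje
    simp only [hlamdef] at hje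
    have h1 : q ^ ((i - ((j2 : ℕ) : ℤ)) - (i - ((j1 : ℕ) : ℤ))) = 1 := by
      rw [zpow_sub₀ hq0, ← hje]
      exact div_self (zpow_ne_zero _ hq0)
    have h2 : (n : ℤ) ∣ ((i - ((j2 : ℕ) : ℤ)) - (i - ((j1 : ℕ) : ℤ))) :=
      (hq.zpow_eq_one_iff_dvd _).1 h1
    have h3 : ((i - ((j2 : ℕ) : ℤ)) - (i - ((j1 : ℕ) : ℤ))) = 0 := by
      refine Int.eq_zero_of_abs_lt_dvd h2 ?_
      have hj1 := j1.isLt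
      have hj2 := j2.isLt
      rw [abs_lt]
      omega
    have hj1 := j1.isLt
    exact Fin.ext (by omega)
  -- the action of `g` on coordinates
  have hreprG : ∀ (x : V) (j : Fin l),
      v.repr (taftG k q n • x) j = lam j * v.repr x j := by
    have hGlin : ∀ (c : k) (x : V), taftG k q n • (c • x) = c • (taftG k q n • x) :=
      fun c x => smul_comm _ c x
    intro x j
    let Glin : V →ₗ[k] V :=
      { toFun := fun x => taftG k q n • x
        map_add' := fun x y => smul_add _ x y
        map_smul' := fun c x => hGlin c x }
    have hmaps : (Finsupp.lapply j).comp (v.repr.toLinearMap.comp Glin)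
        = lam j • ((Finsupp.lapply j : (Fin l →₀ k) →ₗ[k] k).comp v.repr.toLinearMap) := by
      apply v.ext
      intro m
      simp only [LinearMap.comp_apply, LinearEquiv.coe_toLinearMap, LinearMap.smul_apply,
        Finsupp.lapply_apply, LinearMap.coe_mk, AddHom.coe_mk, Glin]
      rw [hgv m, map_smul, Module.Basis.repr_self]
      simp only [Finsupp.smul_apply, Finsupp.single_apply, smul_eq_mul]
      by_cases hm : m = j
      · subst hm; simp [hlamdef]
      · simp [hm]
    have := LinearMap.congr_fun hmaps x
    simpa [Glin, smul_eq_mul] using this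
  -- the key lemma: each coordinate component of an element of a submodule lies in it
  have key : ∀ (W : Submodule (TaftAlgebra k q n) V) (x : V), x ∈ W →
      ∀ j, v.repr x j • v j ∈ W := by
    intro W
    suffices H : ∀ N (x : V), (v.repr x).support.card ≤ N → x ∈ W →
        ∀ j, v.repr x j • v j ∈ W from fun x hx j => H _ x le_rfl hx j
    intro N
    induction N with
    | zero =>
      intro x hcard hx j
      have hsup : (v.repr x).support = ∅ := Finset.card_eq_zero.mp (Nat.le_zero.1 hcard)
      have : v.repr x j = 0 := Finsupp.notMem_support_iff.mp (by simp [hsup])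
      rw [this, zero_smul]
      exact W.zero_mem
    | succ N IH =>
      intro x hcard hx j
      by_cases hsub : (v.repr x).support ⊆ {j}
      · have hxeq : v.repr x j • v j = x := by
          apply v.repr.injective
          ext m
          rw [map_smul, Module.Basis.repr_self]
          simp only [Finsupp.smul_apply, Finsupp.single_apply, smul_eq_mul]
          by_cases hm : m = j
          · subst hm; simp
          · have hms : m ∉ (v.repr x).support := fun hmem =>
              hm (Finset.mem_singleton.1 (hsub hmem))
            rw [Finsupp.notMem_support_iff.mp hms]
            simp [Ne.symm hm]
        rw [hxeq]; exact hx
      · obtain ⟨j0, hj0s, hj0j⟩ : ∃ j0 ∈ (v.repr x).support, j0 ≠ j := by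
          by_contra hcon
          push_neg at hcon
          exact hsub fun m hm => Finset.mem_singleton.2 (hcon m hm)
        set x' := taftG k q n • x - lam j0 • x with hx'def
        have hx'W : x' ∈ W :=
          W.sub_mem (W.smul_mem _ hx) (W.smul_of_tower_mem (lam j0) hx)
        have hrepr' : ∀ m, v.repr x' m = (lam m - lam j0) * v.repr x m := by
          intro m
          have hre : v.repr x' = v.repr (taftG k q n • x) - lam j0 • v.repr x := by
            rw [hx'def, map_sub, LinearEquiv.map_smul]
          rw [hre, Finsupp.sub_apply, Finsupp.smul_apply, hreprG x m, smul_eq_mul, sub_mul]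
        have hsup' : (v.repr x').support ⊆ (v.repr x).support.erase j0 := by
          intro m hm
          have hmne : v.repr x' m ≠ 0 := Finsupp.mem_support_iff.1 hm
          rw [hrepr' m] at hmne
          rw [Finset.mem_erase]
          constructor
          · rintro rfl; exact hmne (by ring)
          · exact Finsupp.mem_support_iff.2 fun h0 => hmne (by rw [h0, mul_zero])
        have hcard' : (v.repr x').support.card ≤ N := by
          have h1 := Finset.card_le_card hsup'
          have h2 := Finset.card_erase_of_mem hj0s
          have h3 : 1 ≤ (v.repr x).support.card := Finset.card_pos.2 ⟨j0, hj0s⟩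
          omega
        have hterm := IH x' hcard' hx'W j
        rw [hrepr' j] at hterm
        have hne : lam j - lam j0 ≠ 0 :=
          sub_ne_zero.2 fun h => hj0j (hlaminj h).symm
        have hfinal := W.smul_of_tower_mem (lam j - lam j0)⁻¹ hterm
        rw [smul_smul, ← mul_assoc, inv_mul_cancel₀ hne, one_mul] at hfinal
        exact hfinal
  -- if `v j` lies in `W` and `j ≤ j'` then `v j'` lies in `W`
  have htail : ∀ (W : Submodule (TaftAlgebra k q n) V) (j : Fin l), v j ∈ W →
      ∀ j' : Fin l, (j : ℕ) ≤ (j' : ℕ) → v j' ∈ W := by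
    intro W j hvj
    have hstep : ∀ (m : Fin l) (hm : (m : ℕ) + 1 < l), v m ∈ W → v ⟨(m : ℕ) + 1, hm⟩ ∈ W := by
      intro m hm hvm
      have := W.smul_mem (taftH k q n) hvm
      rwa [hhv m, dif_pos hm] at this
    have hind : ∀ t (j' : Fin l), (j' : ℕ) = (j : ℕ) + t → v j' ∈ W := by
      intro t
      induction t with
      | zero =>
        intro j' h
        have : j' = j := Fin.ext (by omega)
        rw [this]; exact hvj
      | succ t IH =>
        intro j' h
        have hj'lt := j'.isLt
        have hlt : (j : ℕ) + t < l := by omega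
        have hm := IH ⟨(j : ℕ) + t, hlt⟩ rfl
        have hm1 : ((⟨(j : ℕ) + t, hlt⟩ : Fin l) : ℕ) + 1 < l := by simp; omega
        have := hstep ⟨(j : ℕ) + t, hlt⟩ hm1 hm
        have heq : (⟨((⟨(j : ℕ) + t, hlt⟩ : Fin l) : ℕ) + 1, hm1⟩ : Fin l) = j' :=
          Fin.ext (by simp; omega)
        rwa [heq] at this
    intro j' hle
    exact hind ((j' : ℕ) - (j : ℕ)) j' (by omega)
  -- from a coordinate being nonzero, extract the basis vector itself
  have hbas : ∀ (W : Submodule (TaftAlgebra k q n) V) (x : V), x ∈ W →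
      ∀ j, v.repr x j ≠ 0 → v j ∈ W := by
    intro W x hx j hj
    have := W.smul_of_tower_mem (v.repr x j)⁻¹ (key W x hx j)
    rwa [smul_smul, inv_mul_cancel₀ hj, one_smul] at this
  -- Part 3: every submodule is a tail span
  have part3 : ∀ W : Submodule (TaftAlgebra k q n) V, ∃ m ≤ l,
      ((W : Submodule (TaftAlgebra k q n) V) : Set V)
        = ((Submodule.span k (v '' {j : Fin l | l - m ≤ (j : ℕ)}) : Submodule k V) : Set V) := by
    intro W
    by_cases hWb : ∀ j : Fin l, v j ∉ W
    · refine ⟨0, Nat.zero_le l, ?_⟩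
      have hset : {j : Fin l | l - 0 ≤ (j : ℕ)} = ∅ := by
        ext j
        simp only [Set.mem_setOf_eq, Set.mem_empty_iff_false, iff_false, not_le, Nat.sub_zero]
        exact j.isLt
      rw [hset, Set.image_empty, Submodule.span_empty]
      ext x
      simp only [SetLike.mem_coe, Submodule.mem_bot]
      constructor
      · intro hx
        by_contra hx0
        have hne : v.repr x ≠ 0 := fun h => hx0 (by
          have := congrArg v.repr.symm h
          simpa using this)
        obtain ⟨j, hj⟩ := Finsupp.ne_iff.1 hne
        exact hWb j (hbas W x hx j hj)
      · rintro rfl; exact W.zero_mem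
    · push_neg at hWb
      set S : Finset (Fin l) := Finset.univ.filter (fun j => v j ∈ W) with hSdef
      have hSne : S.Nonempty := by
        obtain ⟨j, hj⟩ := hWb
        exact ⟨j, by simp [hSdef, hj]⟩
      set jm := S.min' hSne with hjmdef
      have hjmW : v jm ∈ W := by
        have := S.min'_mem hSne
        simpa [hSdef] using this
      refine ⟨l - (jm : ℕ), Nat.sub_le l _, ?_⟩
      have hjmlt := jm.isLt
      have hmm : l - (l - (jm : ℕ)) = (jm : ℕ) := by omega
      apply Set.Subset.antisymm
      · intro x hx
        rw [SetLike.mem_coe] at hx ⊢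
        rw [Module.Basis.mem_span_image]
        intro j hj
        simp only [Set.mem_setOf_eq, hmm]
        rw [Finset.mem_coe, Finsupp.mem_support_iff] at hj
        have hvj : v j ∈ W := hbas W x hx j hj
        exact S.min'_le j (by simp [hSdef, hvj])
      · have hspan : Submodule.span k (v '' {j : Fin l | l - (l - (jm : ℕ)) ≤ (j : ℕ)})
            ≤ W.restrictScalars k := by
          rw [Submodule.span_le]
          rintro _ ⟨j, hj, rfl⟩
          simp only [Set.mem_setOf_eq, hmm] at hj
          exact htail W jm hjmW j hj
        intro x hx
        exact hspan hx
  -- Part 2: the submodules form a chain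
  have hmono : ∀ m m' : ℕ, m ≤ m' →
      ((Submodule.span k (v '' {j : Fin l | l - m ≤ (j : ℕ)}) : Submodule k V) : Set V)
        ⊆ ((Submodule.span k (v '' {j : Fin l | l - m' ≤ (j : ℕ)}) : Submodule k V) : Set V) := by
    intro m m' hmm'
    refine Submodule.span_mono (Set.image_mono ?_)
    intro j hj
    simp only [Set.mem_setOf_eq] at hj ⊢
    omega
  have chain : ∀ W U : Submodule (TaftAlgebra k q n) V, W ≤ U ∨ U ≤ W := by
    intro W U
    obtain ⟨m, hm, hWe⟩ := part3 W
    obtain ⟨m', hm', hUe⟩ := part3 U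
    rcases le_total m m' with h | h
    · left
      intro x hx
      have hx' : x ∈ (U : Set V) := by
        rw [hUe]
        exact hmono m m' h (hWe ▸ hx)
      exact hx'
    · right
      intro x hx
      have hx' : x ∈ (W : Set V) := by
        rw [hWe]
        exact hmono m' m h (hUe ▸ hx)
      exact hx'
  refine ⟨⟨?_, ?_⟩, chain, part3⟩
  · intro hbt
    have h0 : (0 : ℕ) < l := hl1
    have : v ⟨0, h0⟩ ∈ (⊥ : Submodule (TaftAlgebra k q n) V) := hbt ▸ Submodule.mem_top
    rw [Submodule.mem_bot] at this
    exact v.ne_zero _ this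
  · intro W U hWU
    rcases chain W U with h | h
    · left
      have : W ≤ ⊥ := by
        have hinf : W ⊓ U = ⊥ := hWU.inf_eq_bot
        rw [← hinf]
        exact le_inf le_rfl h
      exact le_bot_iff.mp this
    · right
      have : U ≤ ⊥ := by
        have hinf : W ⊓ U = ⊥ := hWU.inf_eq_bot
        rw [← hinf]
        exact le_inf h le_rfl
      exact le_bot_iff.mp this
end

section
/- For 1 ≤ l, l' ≤ n and integers i, i', the H_n(q)-modules M(l,i) and M(l',i') are isomorphic if and only if l = l' and i ≡ i' (mod n). -/
open scoped TensorProduct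

section Helpers

variable {k : Type} [Field k] {m : ℕ} {W : Type} [AddCommGroup W] [Module k W]

/-- coordinates of `T x` in terms of coordinates of `x`. -/
lemma repr_map (w : Module.Basis (Fin m) k W) (T : W →ₗ[k] W) (x : W) (r : Fin m) :
    w.repr (T x) r = ∑ j : Fin m, w.repr x j * w.repr (T (w j)) r := by
  conv_lhs => rw [← w.sum_repr x]
  rw [map_sum]
  simp [Finsupp.smul_apply, smul_eq_mul]

lemma shift_ker (w : Module.Basis (Fin m) k W) (T : W →ₗ[k] W)
    (hT : ∀ j : Fin m, T (w j) = if h : (j : ℕ) + 1 < m then w ⟨(j : ℕ) + 1, h⟩ else 0)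
    (x : W) (hx : T x = 0) (j : Fin m) (hj : (j : ℕ) + 1 < m) : w.repr x j = 0 := by
  have h1 := repr_map w T x ⟨(j : ℕ) + 1, hj⟩
  rw [hx] at h1
  simp only [map_zero, Finsupp.coe_zero, Pi.zero_apply] at h1
  rw [Finset.sum_eq_single j] at h1
  · rw [hT j] at h1
    simp only [hj, dif_pos, Module.Basis.repr_self, Finsupp.single_apply_left] at h1
    rw [Finsupp.single_eq_same] at h1
    · simpa using h1.symm
  · intro b _ hb
    rw [hT b]
    by_cases hb1 : (b : ℕ) + 1 < m
    · rw [dif_pos hb1, Module.Basis.repr_self, Finsupp.single_apply, if_neg, mul_zero]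
      intro hcon
      apply hb
      have : (b : ℕ) + 1 = (j : ℕ) + 1 := congrArg Fin.val hcon
      exact Fin.ext (by omega)
    · rw [dif_neg hb1]; simp
  · simp

lemma eig_repr (w : Module.Basis (Fin m) k W) (T : W →ₗ[k] W) (d : Fin m → k)
    (hT : ∀ j : Fin m, T (w j) = d j • w j) (x : W) (μ : k) (hx : T x = μ • x)
    (j : Fin m) : d j * w.repr x j = μ * w.repr x j := by
  have h1 := repr_map w T x j
  rw [hx] at h1
  rw [Finset.sum_eq_single j] at h1
  · rw [hT j] at h1
    simp only [map_smul, Finsupp.smul_apply, smul_eq_mul, Module.Basis.repr_self,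
      Finsupp.single_eq_same, mul_one] at h1
    rw [h1]; ring
  · intro b _ hb
    rw [hT b]
    rw [map_smul, Finsupp.smul_apply, Module.Basis.repr_self, Finsupp.single_apply,
      if_neg hb, smul_zero, mul_zero]
  · simp

end Helpers

section Taft

variable (k : Type) [Field k] (q : k) (n : ℕ)
variable (V : Type) [AddCommGroup V] [Module k V] [Module (TaftAlgebra k q n) V]
  [IsScalarTower k (TaftAlgebra k q n) V]

/-- The action of an element of the Taft algebra, as a `k`-linear map. -/
noncomputable def taftActMap (a : TaftAlgebra k q n) : V →ₗ[k] V where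
  toFun x := a • x
  map_add' := smul_add a
  map_smul' c x := smul_comm a c x

@[simp] lemma taftActMap_apply (a : TaftAlgebra k q n) (x : V) :
    taftActMap k q n V a x = a • x := rfl

variable {W : Type} [AddCommGroup W] [Module k W] [Module (TaftAlgebra k q n) W]
  [IsScalarTower k (TaftAlgebra k q n) W]

/-- A `k`-linear map commuting with `g` and `h` commutes with the whole Taft algebra. -/
lemma taft_smul_comm (f : V →ₗ[k] W)
    (hg : ∀ x, f (taftG k q n • x) = taftG k q n • f x)
    (hh : ∀ x, f (taftH k q n • x) = taftH k q n • f x)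
    (a : TaftAlgebra k q n) (x : V) : f (a • x) = a • f x := by
  obtain ⟨y, rfl⟩ := RingQuot.mkAlgHom_surjective k (TaftRel k q n) a
  induction y using FreeAlgebra.induction generalizing x with
  | grade0 r =>
    rw [AlgHom.commutes, algebraMap_smul, map_smul, algebraMap_smul]
  | grade1 b =>
    cases b
    · exact hh x
    · exact hg x
  | mul a b ha hb =>
    rw [map_mul, mul_smul, mul_smul, ha, hb]
  | add a b ha hb =>
    rw [map_add, add_smul, add_smul, map_add, ha, hb]

end Taft

/-- For `1 ≤ l, l' ≤ n` and integers `i, i'`, the `H_n(q)`-modules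
`M(l,i)` and `M(l',i')` are isomorphic if and only if `l = l'` and `i ≡ i' (mod n)`. -/
theorem taft_M_iso_iff (k : Type) [Field k] (n : ℕ) (hn : 2 ≤ n) (q : k)
    (hq : IsPrimitiveRoot q n) (l l' : ℕ) (hl1 : 1 ≤ l) (hln : l ≤ n)
    (hl'1 : 1 ≤ l') (hl'n : l' ≤ n) (i i' : ℤ)
    (V W : Type) [AddCommGroup V] [Module k V] [Module (TaftAlgebra k q n) V]
    [IsScalarTower k (TaftAlgebra k q n) V]
    [AddCommGroup W] [Module k W] [Module (TaftAlgebra k q n) W]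
    [IsScalarTower k (TaftAlgebra k q n) W]
    (hV : StdMSpec k q n l i V) (hW : StdMSpec k q n l' i' W) :
    Nonempty (V ≃ₗ[TaftAlgebra k q n] W) ↔ (l = l' ∧ i ≡ i' [ZMOD n]) := by
  obtain ⟨v, hvg, hvh⟩ := hV
  obtain ⟨w, hwg, hwh⟩ := hW
  have hn0 : n ≠ 0 := by omega
  have hq0 : q ≠ 0 := hq.ne_zero hn0
  constructor
  · rintro ⟨f⟩
    let e : V ≃ₗ[k] W := f.restrictScalars k
    have hef : ∀ z : V, e z = f z := fun z => rfl
    have hll : l = l' := by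
      have h1 : Module.finrank k V = l := by
        rw [Module.finrank_eq_card_basis v, Fintype.card_fin]
      have h2 : Module.finrank k W = l' := by
        rw [Module.finrank_eq_card_basis w, Fintype.card_fin]
      rw [← h1, ← h2, e.finrank_eq]
    refine ⟨hll, ?_⟩
    set jl : Fin l := ⟨l - 1, by omega⟩ with hjl
    have hjlv : (jl : ℕ) = l - 1 := rfl
    set x : W := e (v jl) with hxdef
    have hx0 : x ≠ 0 := by
      rw [hxdef, (e : V ≃ₗ[k] W).map_ne_zero_iff]
      exact v.ne_zero jl
    have hxh : taftH k q n • x = 0 := by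
      rw [hxdef, hef, ← map_smul f (taftH k q n) (v jl), hvh jl, dif_neg (by rw [hjlv]; omega), map_zero]
    set μ : k := q ^ (i - ((l - 1 : ℕ) : ℤ)) with hμ
    have hxg : taftG k q n • x = μ • x := by
      rw [hxdef, hef, ← map_smul f (taftG k q n) (v jl), hvg jl]
      have : f ((q ^ (i - (((jl : ℕ)) : ℤ))) • v jl) = (q ^ (i - (((jl : ℕ)) : ℤ))) • f (v jl) := by
        rw [← hef, ← hef, map_smul]
      rw [this]
    have hker : ∀ j : Fin l', (j : ℕ) + 1 < l' → w.repr x j = 0 := by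
      intro j hj
      exact shift_ker w (taftActMap k q n W (taftH k q n)) (fun j => hwh j) x hxh j hj
    have heig : ∀ j : Fin l', q ^ (i' - ((j : ℕ) : ℤ)) * w.repr x j = μ * w.repr x j := by
      intro j
      exact eig_repr w (taftActMap k q n W (taftG k q n))
        (fun j => q ^ (i' - ((j : ℕ) : ℤ))) (fun j => hwg j) x μ hxg j
    obtain ⟨j0, hj0⟩ : ∃ j : Fin l', w.repr x j ≠ 0 := by
      by_contra hcon
      push_neg at hcon
      apply hx0
      have : w.repr x = 0 := Finsupp.ext fun j => hcon j
      rwa [map_eq_zero_iff _ w.repr.injective] at this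
    have hj0v : (j0 : ℕ) = l' - 1 := by
      by_contra hne
      exact hj0 (hker j0 (by have := j0.isLt; omega))
    have key : q ^ (i' - ((l' - 1 : ℕ) : ℤ)) = μ := by
      have := heig j0
      rw [hj0v] at this
      exact mul_right_cancel₀ hj0 this
    have hone : q ^ (i' - i) = 1 := by
      have hc : ((l - 1 : ℕ) : ℤ) = ((l' - 1 : ℕ) : ℤ) := by rw [hll]
      rw [hμ, hc] at key
      have : q ^ (i' - i) = q ^ (i' - ((l' - 1 : ℕ) : ℤ)) * (q ^ (i - ((l' - 1 : ℕ) : ℤ)))⁻¹ := by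
        rw [← zpow_neg, ← zpow_add₀ hq0]
        congr 1
        ring
      rw [this, key, mul_inv_cancel₀ (zpow_ne_zero _ hq0)]
    have hdvd : (n : ℤ) ∣ i' - i := (hq.zpow_eq_one_iff_dvd _).mp hone
    exact Int.modEq_iff_dvd.mpr hdvd
  · rintro ⟨hll, hmod⟩
    subst hll
    have hqi : ∀ c : ℤ, q ^ (i - c) = q ^ (i' - c) := by
      intro c
      obtain ⟨t, ht⟩ := (Int.modEq_iff_dvd.mp hmod)
      have h1 : q ^ (i' - c) = q ^ (i - c) * q ^ ((n : ℤ) * t) := by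
        rw [← zpow_add₀ hq0]
        congr 1
        linarith [ht]
      have h2 : q ^ ((n : ℤ) * t) = 1 := by
        rw [zpow_mul]
        rw [show (q : k) ^ (n : ℤ) = 1 by rw [zpow_natCast, hq.pow_eq_one]]
        exact one_zpow t
      rw [h1, h2, mul_one]
    let e : V ≃ₗ[k] W := v.equiv w (Equiv.refl _)
    have he : ∀ j, e (v j) = w j := fun j => by simp [e, Module.Basis.equiv_apply]
    have hcg : ∀ x : V, e (taftG k q n • x) = taftG k q n • e x := by
      have heq : e.toLinearMap ∘ₗ taftActMap k q n V (taftG k q n)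
          = taftActMap k q n W (taftG k q n) ∘ₗ e.toLinearMap := by
        apply v.ext
        intro j
        simp only [LinearMap.comp_apply, taftActMap_apply, LinearEquiv.coe_coe]
        rw [hvg j, map_smul, he, hwg j, hqi]
      intro x
      exact LinearMap.congr_fun heq x
    have hch : ∀ x : V, e (taftH k q n • x) = taftH k q n • e x := by
      have heq : e.toLinearMap ∘ₗ taftActMap k q n V (taftH k q n)
          = taftActMap k q n W (taftH k q n) ∘ₗ e.toLinearMap := by
        apply v.ext
        intro j
        simp only [LinearMap.comp_apply, taftActMap_apply, LinearEquiv.coe_coe]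
        rw [hvh j, he, hwh j]
        by_cases hj : (j : ℕ) + 1 < l
        · rw [dif_pos hj, dif_pos hj, he]
        · rw [dif_neg hj, dif_neg hj, map_zero]
      intro x
      exact LinearMap.congr_fun heq x
    exact ⟨
      { toFun := e
        map_add' := map_add e
        map_smul' := fun a x => taft_smul_comm k q n V e.toLinearMap hcg hch a x
        invFun := e.symm
        left_inv := e.left_inv
        right_inv := e.right_inv }⟩
end

section
/- Set e_i = (1/n)·Σ_{j=0}^{n−1} q^{−ij} g^j in H_n(q) for 0 ≤ i ≤ n−1. Then the e_i are orthogonal idempotents summing to 1, g·e_i = q^i e_i, h^{n−1} e_i ≠ 0, each left ideal H_n(q)e_i is isomorphic to M(n,i) as an H_n(q)-module, and the left regular module decomposes as H_n(q) ≅ ⊕_{i=0}^{n−1} M(n,i). -/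
open scoped TensorProduct

namespace TaftAux

variable {k : Type} [Field k] {n : ℕ} {q : k}

/-- The `g`-action on the model module `⊕_{i<n} M(n,i)`. -/
noncomputable def Gmap (k : Type) [Field k] (q : k) (n : ℕ) :
    ((Fin n × Fin n) → k) →ₗ[k] ((Fin n × Fin n) → k) where
  toFun x p := q ^ (((p.1 : ℕ) : ℤ) - ((p.2 : ℕ) : ℤ)) * x p
  map_add' x y := by funext p; simp [mul_add]
  map_smul' c x := by
    funext p; simp only [Pi.smul_apply, smul_eq_mul, RingHom.id_apply]; ring

/-- The `h`-action on the model module `⊕_{i<n} M(n,i)`. -/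
noncomputable def Hmap (k : Type) [Field k] (n : ℕ) :
    ((Fin n × Fin n) → k) →ₗ[k] ((Fin n × Fin n) → k) where
  toFun x p := if h : 0 < (p.2 : ℕ) then
      x (p.1, ⟨(p.2 : ℕ) - 1, lt_of_le_of_lt (Nat.pred_le _) p.2.isLt⟩) else 0
  map_add' x y := by funext p; by_cases h : 0 < (p.2 : ℕ) <;> simp [h]
  map_smul' c x := by funext p; by_cases h : 0 < (p.2 : ℕ) <;> simp [h]

lemma Gmap_apply (x : (Fin n × Fin n) → k) (p : Fin n × Fin n) :
    Gmap k q n x p = q ^ (((p.1 : ℕ) : ℤ) - ((p.2 : ℕ) : ℤ)) * x p := rfl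

lemma Hmap_apply (x : (Fin n × Fin n) → k) (p : Fin n × Fin n) :
    Hmap k n x p = if h : 0 < (p.2 : ℕ) then
      x (p.1, ⟨(p.2 : ℕ) - 1, lt_of_le_of_lt (Nat.pred_le _) p.2.isLt⟩) else 0 := rfl

lemma Gmap_pow_apply (hq0 : q ≠ 0) (m : ℕ) (x : (Fin n × Fin n) → k) (p : Fin n × Fin n) :
    (Gmap k q n ^ m) x p = q ^ ((((p.1 : ℕ) : ℤ) - ((p.2 : ℕ) : ℤ)) * m) * x p := by
  induction m generalizing x with
  | zero => simp
  | succ m ih =>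
    rw [pow_succ, Module.End.mul_apply, ih, Gmap_apply]
    have h1 : ((((p.1 : ℕ) : ℤ) - ((p.2 : ℕ) : ℤ)) * ((m + 1 : ℕ) : ℤ))
        = (((p.1 : ℕ) : ℤ) - ((p.2 : ℕ) : ℤ)) * m + ((((p.1 : ℕ) : ℤ) - ((p.2 : ℕ) : ℤ))) := by
      push_cast; ring
    rw [h1, zpow_add₀ hq0, mul_assoc]

lemma Hmap_pow_apply (b : ℕ) (x : (Fin n × Fin n) → k) (p : Fin n × Fin n) :
    (Hmap k n ^ b) x p = if h : b ≤ (p.2 : ℕ) then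
      x (p.1, ⟨(p.2 : ℕ) - b, lt_of_le_of_lt (Nat.sub_le _ _) p.2.isLt⟩) else 0 := by
  induction b generalizing p with
  | zero => simp
  | succ b ih =>
    rw [pow_succ', Module.End.mul_apply, Hmap_apply]
    by_cases h0 : 0 < (p.2 : ℕ)
    · rw [dif_pos h0, ih]
      by_cases hb : b ≤ (p.2 : ℕ) - 1
      · rw [dif_pos hb, dif_pos (show b + 1 ≤ (p.2 : ℕ) by omega)]
        refine congrArg x ?_
        exact Prod.ext rfl (Fin.ext (by simp only []; omega))
      · rw [dif_neg hb, dif_neg (by omega)]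
    · rw [dif_neg h0, dif_neg (by omega)]

lemma Gmap_pow_n (hq : IsPrimitiveRoot q n) (hq0 : q ≠ 0) : Gmap k q n ^ n = 1 := by
  apply LinearMap.ext; intro x; funext p
  rw [Gmap_pow_apply hq0]
  have h1 : q ^ ((((p.1 : ℕ) : ℤ) - ((p.2 : ℕ) : ℤ)) * (n : ℤ)) = 1 := by
    rw [mul_comm, zpow_mul]
    rw [show q ^ (n : ℤ) = 1 by rw [zpow_natCast, hq.pow_eq_one]]
    exact one_zpow _
  rw [h1, one_mul, Module.End.one_apply]

lemma Hmap_pow_n : Hmap k n ^ n = (0 : Module.End k ((Fin n × Fin n) → k)) := by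
  apply LinearMap.ext; intro x; funext p
  rw [Hmap_pow_apply, dif_neg (by have := p.2.isLt; omega)]
  simp

lemma HGrel (hq0 : q ≠ 0) :
    Hmap k n * Gmap k q n = q • (Gmap k q n * Hmap k n) := by
  apply LinearMap.ext; intro x; funext p
  simp only [Module.End.mul_apply, LinearMap.smul_apply, Pi.smul_apply, smul_eq_mul,
    Hmap_apply, Gmap_apply]
  by_cases h0 : 0 < (p.2 : ℕ)
  · rw [dif_pos h0, dif_pos h0]
    have hc : ((((p.2 : ℕ) - 1 : ℕ)) : ℤ) = ((p.2 : ℕ) : ℤ) - 1 := by omega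
    rw [hc, show ((p.1 : ℕ) : ℤ) - (((p.2 : ℕ) : ℤ) - 1)
        = 1 + (((p.1 : ℕ) : ℤ) - ((p.2 : ℕ) : ℤ)) by ring]
    rw [zpow_add₀ hq0, zpow_one, mul_assoc]
  · rw [dif_neg h0, dif_neg h0]
    simp

/-- The representation of the Taft algebra on `⊕_{i<n} M(n,i)`. -/
noncomputable def rho (k : Type) [Field k] (q : k) (n : ℕ)
    (hq : IsPrimitiveRoot q n) (hq0 : q ≠ 0) :
    TaftAlgebra k q n →ₐ[k] Module.End k ((Fin n × Fin n) → k) :=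
  RingQuot.liftAlgHom k ⟨FreeAlgebra.lift k (fun b => if b then Gmap k q n else Hmap k n), by
    intro x y hxy
    cases hxy with
    | g_pow =>
      simp only [map_pow, map_one, FreeAlgebra.lift_ι_apply, if_true]
      exact Gmap_pow_n hq hq0
    | h_pow =>
      simp only [map_pow, map_zero, FreeAlgebra.lift_ι_apply, if_false]
      exact Hmap_pow_n
    | h_g =>
      simp only [map_mul, map_smul, FreeAlgebra.lift_ι_apply, if_true, if_false]
      exact HGrel hq0⟩

lemma rho_g (hq : IsPrimitiveRoot q n) (hq0 : q ≠ 0) :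
    rho k q n hq hq0 (taftG k q n) = Gmap k q n := by
  rw [taftG, rho, RingQuot.liftAlgHom_mkAlgHom_apply]
  simp [FreeAlgebra.lift_ι_apply]

lemma rho_h (hq : IsPrimitiveRoot q n) (hq0 : q ≠ 0) :
    rho k q n hq hq0 (taftH k q n) = Hmap k n := by
  rw [taftH, rho, RingQuot.liftAlgHom_mkAlgHom_apply]
  simp [FreeAlgebra.lift_ι_apply]

lemma fourier (hq : IsPrimitiveRoot q n) (m : ℤ) :
    (∑ a ∈ Finset.range n, q ^ (m * (a : ℤ))) = if (n : ℤ) ∣ m then (n : k) else 0 := by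
  have hterm : ∀ a ∈ Finset.range n, q ^ (m * (a : ℤ)) = (q ^ m) ^ a := by
    intro a _; rw [zpow_mul, zpow_natCast]
  rw [Finset.sum_congr rfl hterm]
  split_ifs with hd
  · rw [(hq.zpow_eq_one_iff_dvd m).2 hd]; simp
  · have h1 : q ^ m - 1 ≠ 0 :=
      sub_ne_zero.mpr (fun hh => hd ((hq.zpow_eq_one_iff_dvd m).1 hh))
    have h2 : (q ^ m) ^ n = 1 := by
      rw [← zpow_natCast (q ^ m), ← zpow_mul, mul_comm, zpow_mul, zpow_natCast,
        hq.pow_eq_one, one_zpow]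
    have h3 := geom_sum_mul (q ^ m) n
    rw [h2, sub_self] at h3
    rcases mul_eq_zero.mp h3 with h | h
    · exact h
    · exact absurd h h1

lemma dvd_cast_sub_iff {a b : ℕ} (ha : a < n) (hb : b < n) :
    ((n : ℤ) ∣ (a : ℤ) - (b : ℤ)) ↔ a = b := by
  constructor
  · intro hd
    have h1 : n ∣ ((a : ℤ) - (b : ℤ)).natAbs := Int.natAbs_dvd_natAbs.mpr (by simpa using hd)
    by_cases hz : ((a : ℤ) - (b : ℤ)).natAbs = 0
    · omega
    · have := Nat.le_of_dvd (Nat.pos_of_ne_zero hz) h1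
      omega
  · rintro rfl; simp

lemma taft_g_pow_n : taftG k q n ^ n = 1 := by
  have h := RingQuot.mkAlgHom_rel k (@TaftRel.g_pow k _ q n)
  simpa only [map_pow, map_one, taftG] using h

lemma taft_h_pow_n : taftH k q n ^ n = 0 := by
  have h := RingQuot.mkAlgHom_rel k (@TaftRel.h_pow k _ q n)
  simpa only [map_pow, map_zero, taftH] using h

lemma taft_hg : taftH k q n * taftG k q n = q • (taftG k q n * taftH k q n) := by
  have h := RingQuot.mkAlgHom_rel k (@TaftRel.h_g k _ q n)
  simpa only [map_mul, map_smul, taftG, taftH] using h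

lemma taft_hpow_g (b : ℕ) :
    taftH k q n ^ b * taftG k q n = q ^ b • (taftG k q n * taftH k q n ^ b) := by
  induction b with
  | zero => simp
  | succ b ih =>
    rw [show taftH k q n ^ (b + 1) = taftH k q n * taftH k q n ^ b from pow_succ' _ _]
    rw [mul_assoc, ih, mul_smul_comm, ← mul_assoc, taft_hg, smul_mul_assoc, smul_smul,
      ← pow_succ, mul_assoc]

lemma taft_g_hpow (hq0 : q ≠ 0) (b : ℕ) :
    taftG k q n * taftH k q n ^ b = (q ^ b)⁻¹ • (taftH k q n ^ b * taftG k q n) := by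
  rw [taft_hpow_g, smul_smul, inv_mul_cancel₀ (pow_ne_zero _ hq0), one_smul]

/-- The idempotent `e_i`. -/
noncomputable def Eid (k : Type) [Field k] (q : k) (n : ℕ) (i : Fin n) : TaftAlgebra k q n :=
  (n : k)⁻¹ • ∑ j ∈ Finset.range n,
    q ^ (-(((i : ℕ) * j : ℕ) : ℤ)) • taftG k q n ^ j

lemma Eid_eq (i : Fin n) : Eid k q n i = (n : k)⁻¹ • ∑ j ∈ Finset.range n,
    q ^ ((-((i : ℕ) : ℤ)) * (j : ℤ)) • taftG k q n ^ j := by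
  unfold Eid
  congr 1
  refine Finset.sum_congr rfl fun j _ => ?_
  have h1 : (-(((i : ℕ) * j : ℕ) : ℤ)) = (-((i : ℕ) : ℤ)) * (j : ℤ) := by push_cast; ring
  rw [h1]

lemma sum_shift {M : Type} [AddCommGroup M] (F : ℕ → M) (hFn : F n = F 0) :
    (∑ j ∈ Finset.range n, F (j + 1)) = ∑ j ∈ Finset.range n, F j := by
  have e1 := Finset.sum_range_succ' F n
  have e2 := Finset.sum_range_succ F n
  have e3 : (∑ j ∈ Finset.range n, F (j + 1)) + F 0
      = (∑ j ∈ Finset.range n, F j) + F n := e1.symm.trans e2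
  rw [hFn] at e3
  exact add_right_cancel e3

lemma taft_g_mul_E (hq : IsPrimitiveRoot q n) (hq0 : q ≠ 0) (i : Fin n) :
    taftG k q n * Eid k q n i = q ^ (i : ℕ) • Eid k q n i := by
  have key : ∀ j : ℕ, taftG k q n * (q ^ ((-((i : ℕ) : ℤ)) * (j : ℤ)) • taftG k q n ^ j)
      = q ^ (((i : ℕ) : ℤ)) •
        (q ^ ((-((i : ℕ) : ℤ)) * (((j + 1 : ℕ)) : ℤ)) • taftG k q n ^ (j + 1)) := by
    intro j
    rw [mul_smul_comm, ← pow_succ', smul_smul, ← zpow_add₀ hq0]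
    congr 1
    push_cast; ring
  have hFn : (fun j : ℕ => q ^ ((-((i : ℕ) : ℤ)) * (j : ℤ)) • taftG k q n ^ j) n
      = (fun j : ℕ => q ^ ((-((i : ℕ) : ℤ)) * (j : ℤ)) • taftG k q n ^ j) 0 := by
    simp only []
    rw [taft_g_pow_n, pow_zero]
    rw [show (-((i : ℕ) : ℤ)) * ((n : ℕ) : ℤ) = (n : ℤ) * (-((i : ℕ) : ℤ)) by ring,
      zpow_mul, zpow_natCast, hq.pow_eq_one, one_zpow]
    simp
  rw [Eid_eq, mul_smul_comm, Finset.mul_sum]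
  rw [Finset.sum_congr rfl (fun j _ => key j), ← Finset.smul_sum,
    sum_shift (fun j : ℕ => q ^ ((-((i : ℕ) : ℤ)) * (j : ℤ)) • taftG k q n ^ j) hFn,
    smul_comm]
  rw [show q ^ (((i : ℕ) : ℤ)) = q ^ (i : ℕ) from zpow_natCast q (i : ℕ)]

lemma taft_gpow_mul_E (hq : IsPrimitiveRoot q n) (hq0 : q ≠ 0) (m : ℕ) (i : Fin n) :
    taftG k q n ^ m * Eid k q n i = q ^ ((i : ℕ) * m) • Eid k q n i := by
  induction m with
  | zero => simp
  | succ m ih =>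
    rw [pow_succ, mul_assoc, taft_g_mul_E hq hq0, mul_smul_comm, ih, smul_smul, ← pow_add]
    congr 1
    ring

lemma taft_E_mul_E (hq : IsPrimitiveRoot q n) (hq0 : q ≠ 0) (hnk : (n : k) ≠ 0)
    (i j : Fin n) :
    Eid k q n i * Eid k q n j = if i = j then Eid k q n i else 0 := by
  conv_lhs => rw [Eid_eq]
  rw [smul_mul_assoc, Finset.sum_mul]
  have hterm : ∀ m ∈ Finset.range n,
      (q ^ ((-((i : ℕ) : ℤ)) * (m : ℤ)) • taftG k q n ^ m) * Eid k q n j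
      = q ^ ((((j : ℕ) : ℤ) - ((i : ℕ) : ℤ)) * (m : ℤ)) • Eid k q n j := by
    intro m _
    rw [smul_mul_assoc, taft_gpow_mul_E hq hq0, smul_smul]
    congr 1
    rw [← zpow_natCast q ((j : ℕ) * m), ← zpow_add₀ hq0]
    congr 1
    push_cast; ring
  rw [Finset.sum_congr rfl hterm, ← Finset.sum_smul, fourier hq]
  have hiff := dvd_cast_sub_iff (n := n) j.isLt i.isLt
  by_cases hij : i = j
  · rw [if_pos (hiff.2 (by rw [hij])), if_pos hij, smul_smul,
      inv_mul_cancel₀ hnk, one_smul, hij]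
  · rw [if_neg (fun hd => hij (Fin.ext (hiff.1 hd)).symm), if_neg hij, zero_smul, smul_zero]

lemma taft_sum_E (hq : IsPrimitiveRoot q n) (hq0 : q ≠ 0) (hnk : (n : k) ≠ 0)
    (hn : 2 ≤ n) :
    ∑ i : Fin n, Eid k q n i = 1 := by
  have step1 : ∑ i : Fin n, Eid k q n i
      = (n : k)⁻¹ • ∑ j ∈ Finset.range n,
          (∑ i : Fin n, q ^ ((-(j : ℤ)) * ((i : ℕ) : ℤ))) • taftG k q n ^ j := by
    rw [Finset.sum_congr rfl (fun i _ => Eid_eq i), ← Finset.smul_sum]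
    congr 1
    rw [Finset.sum_comm]
    refine Finset.sum_congr rfl fun j _ => ?_
    rw [← Finset.sum_smul]
    congr 1
    refine Finset.sum_congr rfl fun i _ => ?_
    congr 1
    ring
  rw [step1]
  have step2 : ∀ j ∈ Finset.range n,
      (∑ i : Fin n, q ^ ((-(j : ℤ)) * ((i : ℕ) : ℤ))) • taftG k q n ^ j
      = (if j = 0 then (n : k) else 0) • taftG k q n ^ j := by
    intro j hj
    congr 1
    rw [Fin.sum_univ_eq_sum_range (fun i => q ^ ((-(j : ℤ)) * (i : ℤ))) n, fourier hq]
    simp only [Finset.mem_range] at hj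
    by_cases hj0 : j = 0
    · subst hj0; simp
    · rw [if_neg hj0, if_neg]
      intro hdvd
      rw [Int.dvd_neg] at hdvd
      have h2 : n ∣ j := Int.ofNat_dvd.mp hdvd
      have := Nat.le_of_dvd (Nat.pos_of_ne_zero hj0) h2
      omega
  rw [Finset.sum_congr rfl step2]
  rw [Finset.sum_eq_single 0]
  · rw [if_pos rfl, pow_zero, smul_smul, inv_mul_cancel₀ hnk, one_smul]
  · intro b _ hb; rw [if_neg hb, zero_smul]
  · intro habs; exact absurd (Finset.mem_range.mpr (by omega)) habs

lemma taft_gpow_eq (hq : IsPrimitiveRoot q n) (hq0 : q ≠ 0) (hnk : (n : k) ≠ 0)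
    (hn : 2 ≤ n) (a : ℕ) :
    taftG k q n ^ a = ∑ i : Fin n, q ^ ((i : ℕ) * a) • Eid k q n i := by
  conv_lhs => rw [← mul_one (taftG k q n ^ a), ← taft_sum_E hq hq0 hnk hn]
  rw [Finset.mul_sum]
  exact Finset.sum_congr rfl fun i _ => taft_gpow_mul_E hq hq0 a i

/-- The candidate basis vectors `u_{i,j} = h^j e_i`. -/
noncomputable def uu (k : Type) [Field k] (q : k) (n : ℕ) (p : Fin n × Fin n) :
    TaftAlgebra k q n :=
  taftH k q n ^ ((p.2 : ℕ)) * Eid k q n p.1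

/-- The cyclic vector: sum of the top vectors of each `M(n,i)`. -/
noncomputable def Wvec (k : Type) [Field k] (n : ℕ) : (Fin n × Fin n) → k :=
  fun p => if (p.2 : ℕ) = 0 then 1 else 0

lemma rho_E_W [NeZero n] (hq : IsPrimitiveRoot q n) (hq0 : q ≠ 0) (hnk : (n : k) ≠ 0)
    (i : Fin n) :
    rho k q n hq hq0 (Eid k q n i) (Wvec k n)
      = Pi.single ((i, (0 : Fin n)) : Fin n × Fin n) (1 : k) := by
  rw [Eid_eq, map_smul, map_sum]
  funext p
  simp only [LinearMap.smul_apply, LinearMap.coe_sum, Finset.sum_apply, map_smul, map_pow,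
    rho_g hq hq0, Pi.smul_apply, smul_eq_mul, Gmap_pow_apply hq0]
  by_cases h2 : (p.2 : ℕ) = 0
  · have hW : Wvec k n p = 1 := if_pos h2
    have hp2 : ((p.2 : ℕ) : ℤ) = 0 := by exact_mod_cast h2
    have hterm : ∀ j ∈ Finset.range n,
        q ^ ((-((i : ℕ) : ℤ)) * (j : ℤ))
          * (q ^ ((((p.1 : ℕ) : ℤ) - ((p.2 : ℕ) : ℤ)) * (j : ℤ)) * Wvec k n p)
        = q ^ (((((p.1 : ℕ) : ℤ) - ((i : ℕ) : ℤ))) * (j : ℤ)) := by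
      intro j _
      rw [hW, mul_one, ← zpow_add₀ hq0]
      congr 1
      rw [hp2]; ring
    rw [Finset.sum_congr rfl hterm, fourier hq, Pi.single_apply]
    have hiff : ((n : ℤ) ∣ ((p.1 : ℕ) : ℤ) - ((i : ℕ) : ℤ)) ↔ p = (i, (0 : Fin n)) := by
      rw [dvd_cast_sub_iff p.1.isLt i.isLt]
      constructor
      · intro hh
        exact Prod.ext (Fin.ext hh) (Fin.ext (by simpa using h2))
      · intro hh
        rw [congrArg Fin.val (congrArg Prod.fst hh)]
    rw [if_congr hiff rfl rfl]
    by_cases hp : p = (i, (0 : Fin n))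
    · rw [if_pos hp, if_pos hp, inv_mul_cancel₀ hnk]
    · rw [if_neg hp, if_neg hp, mul_zero]
  · have hW : Wvec k n p = 0 := if_neg h2
    rw [hW]
    simp only [mul_zero, Finset.sum_const_zero]
    rw [Pi.single_apply, if_neg (fun hh =>
      h2 (by rw [congrArg Fin.val (congrArg Prod.snd hh), Fin.val_zero]))]

lemma Hpow_single_s7 [NeZero n] (i jf : Fin n) :
    (Hmap k n ^ (jf : ℕ)) (Pi.single ((i, (0 : Fin n)) : Fin n × Fin n) (1 : k))
      = Pi.single ((i, jf) : Fin n × Fin n) (1 : k) := by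
  funext p
  rw [Hmap_pow_apply]
  by_cases hle : (jf : ℕ) ≤ (p.2 : ℕ)
  · rw [dif_pos hle, Pi.single_apply, Pi.single_apply]
    have hcond : ((p.1, (⟨(p.2 : ℕ) - (jf : ℕ),
          lt_of_le_of_lt (Nat.sub_le _ _) p.2.isLt⟩ : Fin n)) = (i, (0 : Fin n)))
        ↔ (p = (i, jf)) := by
      constructor
      · intro hh
        have h1 : p.1 = i := congrArg Prod.fst hh
        have h3 : (p.2 : ℕ) - (jf : ℕ) = 0 := by
          have h2 := congrArg Fin.val (congrArg Prod.snd hh)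
          simpa using h2
        have h4 : (p.2 : ℕ) = (jf : ℕ) := by omega
        exact Prod.ext h1 (Fin.ext h4)
      · intro hh
        have h1 : p.1 = i := congrArg Prod.fst hh
        have h2 : (p.2 : ℕ) = (jf : ℕ) := congrArg Fin.val (congrArg Prod.snd hh)
        refine Prod.ext h1 (Fin.ext ?_)
        simp [h2]
    rw [if_congr hcond rfl rfl]
  · rw [dif_neg hle, Pi.single_apply, if_neg]
    intro hh
    have h2 : p.2 = jf := congrArg Prod.snd hh
    rw [h2] at hle
    exact hle (le_refl _)

lemma rho_uu_W [NeZero n] (hq : IsPrimitiveRoot q n) (hq0 : q ≠ 0) (hnk : (n : k) ≠ 0)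
    (p : Fin n × Fin n) :
    rho k q n hq hq0 (uu k q n p) (Wvec k n) = Pi.single p (1 : k) := by
  rw [uu, map_mul, map_pow, rho_h hq hq0, Module.End.mul_apply, rho_E_W hq hq0 hnk,
    Hpow_single_s7]

lemma uu_indep [NeZero n] (hq : IsPrimitiveRoot q n) (hq0 : q ≠ 0) (hnk : (n : k) ≠ 0) :
    LinearIndependent k (uu k q n) := by
  have hpi : LinearIndependent k (fun p : Fin n × Fin n => Pi.single p (1 : k)) := by
    have h := (Pi.basisFun k (Fin n × Fin n)).linearIndependent
    have he : ⇑(Pi.basisFun k (Fin n × Fin n))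
        = fun p : Fin n × Fin n => Pi.single p (1 : k) :=
      funext fun p => Pi.basisFun_apply k (Fin n × Fin n) p
    rwa [he] at h
  refine LinearIndependent.of_comp
    ((LinearMap.applyₗ (Wvec k n)).comp (rho k q n hq hq0).toLinearMap) ?_
  have hc : (⇑((LinearMap.applyₗ (Wvec k n)).comp (rho k q n hq hq0).toLinearMap)
      ∘ uu k q n) = fun p : Fin n × Fin n => Pi.single p (1 : k) := by
    funext p
    exact rho_uu_W hq hq0 hnk p
  rw [hc]; exact hpi

lemma taft_g_mul_uu (hq : IsPrimitiveRoot q n) (hq0 : q ≠ 0) (p : Fin n × Fin n) :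
    taftG k q n * uu k q n p
      = q ^ (((p.1 : ℕ) : ℤ) - ((p.2 : ℕ) : ℤ)) • uu k q n p := by
  simp only [uu]
  rw [← mul_assoc, taft_g_hpow hq0, smul_mul_assoc, mul_assoc, taft_g_mul_E hq hq0,
    mul_smul_comm, smul_smul]
  congr 1
  rw [zpow_sub₀ hq0, zpow_natCast, zpow_natCast, div_eq_mul_inv, mul_comm]

lemma taft_h_mul_uu (p : Fin n × Fin n) :
    taftH k q n * uu k q n p
      = if h : (p.2 : ℕ) + 1 < n then uu k q n (p.1, ⟨(p.2 : ℕ) + 1, h⟩) else 0 := by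
  simp only [uu]
  rw [← mul_assoc, ← pow_succ']
  by_cases hlt : (p.2 : ℕ) + 1 < n
  · rw [dif_pos hlt]
  · rw [dif_neg hlt, show (p.2 : ℕ) + 1 = n by have := p.2.isLt; omega, taft_h_pow_n,
      zero_mul]

lemma taft_adjoin_top :
    Algebra.adjoin k ({taftG k q n, taftH k q n} : Set (TaftAlgebra k q n)) = ⊤ := by
  have h2 : (Algebra.adjoin k (Set.range (FreeAlgebra.ι k (X := Bool)))).map
      (RingQuot.mkAlgHom k (TaftRel k q n)) = ⊤ := by
    rw [FreeAlgebra.adjoin_range_ι, Algebra.map_top]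
    exact (AlgHom.range_eq_top _).mpr (RingQuot.mkAlgHom_surjective k _)
  rw [AlgHom.map_adjoin] at h2
  have h3 : (RingQuot.mkAlgHom k (TaftRel k q n)) '' (Set.range (FreeAlgebra.ι k))
      = {taftG k q n, taftH k q n} := by
    ext z
    simp only [Set.mem_image, Set.mem_range, Set.mem_insert_iff, Set.mem_singleton_iff]
    constructor
    · rintro ⟨_, ⟨b, rfl⟩, rfl⟩
      cases b
      · right; rfl
      · left; rfl
    · rintro (rfl | rfl)
      · exact ⟨FreeAlgebra.ι k true, ⟨true, rfl⟩, rfl⟩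
      · exact ⟨FreeAlgebra.ι k false, ⟨false, rfl⟩, rfl⟩
  rw [h3] at h2
  exact h2

lemma taft_top_le_span [NeZero n] (hq : IsPrimitiveRoot q n) (hq0 : q ≠ 0)
    (hnk : (n : k) ≠ 0) (hn : 2 ≤ n) :
    (⊤ : Submodule k (TaftAlgebra k q n))
      ≤ Submodule.span k (Set.range (uu k q n)) := by
  have hone : (1 : TaftAlgebra k q n) ∈ Submodule.span k (Set.range (uu k q n)) := by
    rw [show (1 : TaftAlgebra k q n) = ∑ i : Fin n, Eid k q n i from
      (taft_sum_E hq hq0 hnk hn).symm]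
    refine Submodule.sum_mem _ fun i _ => ?_
    have h1 : Eid k q n i = uu k q n (i, (0 : Fin n)) := by
      simp [uu]
    rw [h1]
    exact Submodule.subset_span ⟨(i, 0), rfl⟩
  have hg : ∀ x ∈ Submodule.span k (Set.range (uu k q n)),
      taftG k q n * x ∈ Submodule.span k (Set.range (uu k q n)) := by
    intro x hx
    refine Submodule.span_induction (fun z hz => ?_) ?_ (fun a b _ _ ha hb => ?_)
      (fun c a _ ha => ?_) hx
    · rcases hz with ⟨p, rfl⟩
      rw [taft_g_mul_uu hq hq0]
      exact Submodule.smul_mem _ _ (Submodule.subset_span ⟨p, rfl⟩)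
    · rw [mul_zero]; exact Submodule.zero_mem _
    · rw [mul_add]; exact Submodule.add_mem _ ha hb
    · rw [mul_smul_comm]; exact Submodule.smul_mem _ _ ha
  have hh : ∀ x ∈ Submodule.span k (Set.range (uu k q n)),
      taftH k q n * x ∈ Submodule.span k (Set.range (uu k q n)) := by
    intro x hx
    refine Submodule.span_induction (fun z hz => ?_) ?_ (fun a b _ _ ha hb => ?_)
      (fun c a _ ha => ?_) hx
    · rcases hz with ⟨p, rfl⟩
      rw [taft_h_mul_uu]
      by_cases hlt : (p.2 : ℕ) + 1 < n
      · rw [dif_pos hlt]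
        exact Submodule.subset_span ⟨_, rfl⟩
      · rw [dif_neg hlt]
        exact Submodule.zero_mem _
    · rw [mul_zero]; exact Submodule.zero_mem _
    · rw [mul_add]; exact Submodule.add_mem _ ha hb
    · rw [mul_smul_comm]; exact Submodule.smul_mem _ _ ha
  have hmul : ∀ y : TaftAlgebra k q n, ∀ x ∈ Submodule.span k (Set.range (uu k q n)),
      y * x ∈ Submodule.span k (Set.range (uu k q n)) := by
    intro y
    have hy : y ∈ Algebra.adjoin k ({taftG k q n, taftH k q n} : Set (TaftAlgebra k q n)) := by
      rw [taft_adjoin_top]; exact Algebra.mem_top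
    refine Algebra.adjoin_induction (fun z hz => ?_) (fun r x hx => ?_)
      (fun a b _ _ ha hb x hx => ?_) (fun a b _ _ ha hb x hx => ?_) hy
    · simp only [Set.mem_insert_iff, Set.mem_singleton_iff] at hz
      rcases hz with rfl | rfl
      · exact hg
      · exact hh
    · rw [← Algebra.smul_def]
      exact Submodule.smul_mem _ _ hx
    · rw [add_mul]
      exact Submodule.add_mem _ (ha x hx) (hb x hx)
    · rw [mul_assoc]
      exact ha _ (hb x hx)
  intro x _
  have h := hmul x 1 hone
  rwa [mul_one] at h

lemma taft_hpow_E_ne [NeZero n] (hq : IsPrimitiveRoot q n) (hq0 : q ≠ 0)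
    (hnk : (n : k) ≠ 0) (hn : 2 ≤ n) (i : Fin n) :
    taftH k q n ^ (n - 1) * Eid k q n i ≠ 0 := by
  intro h0
  have h1 := congrArg (fun x => rho k q n hq hq0 x (Wvec k n)) h0
  simp only [map_zero, LinearMap.zero_apply] at h1
  have h2 : taftH k q n ^ (n - 1) * Eid k q n i
      = uu k q n (i, ⟨n - 1, by omega⟩) := rfl
  rw [h2, rho_uu_W hq hq0 hnk] at h1
  have h3 := congrFun h1 (i, ⟨n - 1, by omega⟩)
  rw [Pi.single_eq_same, Pi.zero_apply] at h3
  exact one_ne_zero h3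

lemma taft_range_eq [NeZero n] (hq : IsPrimitiveRoot q n) (hq0 : q ≠ 0)
    (hnk : (n : k) ≠ 0) (hn : 2 ≤ n) (i : Fin n) :
    LinearMap.range (LinearMap.mulRight k (Eid k q n i)
        : TaftAlgebra k q n →ₗ[k] TaftAlgebra k q n)
      = Submodule.span k (Set.range fun j : Fin n => uu k q n (i, j)) := by
  apply le_antisymm
  · rintro x ⟨y, rfl⟩
    rw [LinearMap.mulRight_apply]
    have hy : y ∈ Submodule.span k (Set.range (uu k q n)) :=
      taft_top_le_span hq hq0 hnk hn Submodule.mem_top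
    refine Submodule.span_induction (fun z hz => ?_) ?_ (fun a b _ _ ha hb => ?_)
      (fun c a _ ha => ?_) hy
    · rcases hz with ⟨p, rfl⟩
      rw [uu, mul_assoc, taft_E_mul_E hq hq0 hnk]
      by_cases hpi : p.1 = i
      · rw [if_pos hpi, hpi]
        exact Submodule.subset_span ⟨p.2, rfl⟩
      · rw [if_neg hpi, mul_zero]
        exact Submodule.zero_mem _
    · rw [zero_mul]; exact Submodule.zero_mem _
    · rw [add_mul]; exact Submodule.add_mem _ ha hb
    · rw [smul_mul_assoc]; exact Submodule.smul_mem _ _ ha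
  · rw [Submodule.span_le]
    rintro x ⟨j, rfl⟩
    refine ⟨uu k q n (i, j), ?_⟩
    rw [LinearMap.mulRight_apply, uu, mul_assoc, taft_E_mul_E hq hq0 hnk, if_pos rfl]
    rfl

end TaftAux


/-- With `e_i = (1/n)·Σ_{j<n} q^{−ij} g^j`, the `e_i` are orthogonal
idempotents summing to `1`, `g e_i = q^i e_i`, `h^{n−1} e_i ≠ 0`, each left ideal
`H_n(q)e_i` has a standard basis making it a copy of `M(n,i)`, and the left regular
module has a basis exhibiting it as `⊕_{i<n} M(n,i)`. -/
theorem taft_regular_decomposition (k : Type) [Field k] (n : ℕ) (hn : 2 ≤ n) (q : k)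
    (hq : IsPrimitiveRoot q n)
    (e : Fin n → TaftAlgebra k q n)
    (he : ∀ i : Fin n, e i = (n : k)⁻¹ •
      ∑ j ∈ Finset.range n, q ^ (-(((i : ℕ) * j : ℕ) : ℤ)) • taftG k q n ^ j) :
    -- orthogonal idempotents summing to 1
    (∀ i j : Fin n, e i * e j = if i = j then e i else 0) ∧
    (∑ i : Fin n, e i = 1) ∧
    -- `g e_i = q^i e_i`
    (∀ i : Fin n, taftG k q n * e i = q ^ (i : ℕ) • e i) ∧
    -- `h^{n-1} e_i ≠ 0`
    (∀ i : Fin n, taftH k q n ^ (n - 1) * e i ≠ 0) ∧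
    -- `H_n(q) e_i ≅ M(n,i)`: the left ideal `H e_i` has a standard `M(n,i)`-basis
    (∀ i : Fin n, ∃ w : Module.Basis (Fin n) k
        ↥(LinearMap.range (LinearMap.mulRight k (e i) : TaftAlgebra k q n →ₗ[k] TaftAlgebra k q n)),
      (∀ j : Fin n, taftG k q n * (w j : TaftAlgebra k q n)
          = q ^ (((i : ℕ) : ℤ) - ((j : ℕ) : ℤ)) • (w j : TaftAlgebra k q n)) ∧
      (∀ j : Fin n, taftH k q n * (w j : TaftAlgebra k q n)
          = if h : (j : ℕ) + 1 < n then (w ⟨(j : ℕ) + 1, h⟩ : TaftAlgebra k q n) else 0)) ∧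
    -- `H_n(q) ≅ ⊕_{i<n} M(n,i)` as left regular module
    (∃ u : Module.Basis (Fin n × Fin n) k (TaftAlgebra k q n),
      (∀ p : Fin n × Fin n, taftG k q n * u p
          = q ^ (((p.1 : ℕ) : ℤ) - ((p.2 : ℕ) : ℤ)) • u p) ∧
      (∀ p : Fin n × Fin n, taftH k q n * u p
          = if h : (p.2 : ℕ) + 1 < n then u (p.1, ⟨(p.2 : ℕ) + 1, h⟩) else 0)) := by
  classical
  haveI : NeZero n := ⟨by omega⟩
  have hq0 : q ≠ 0 := hq.ne_zero (by omega)
  have hnk : (n : k) ≠ 0 := hq.neZero'.out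
  have hee : ∀ i : Fin n, e i = TaftAux.Eid k q n i := fun i => (he i).trans rfl
  refine ⟨?_, ?_, ?_, ?_, ?_, ?_⟩
  · intro i j
    rw [hee i, hee j]
    exact TaftAux.taft_E_mul_E hq hq0 hnk i j
  · rw [Finset.sum_congr rfl fun i _ => hee i]
    exact TaftAux.taft_sum_E hq hq0 hnk hn
  · intro i
    rw [hee i]
    exact TaftAux.taft_g_mul_E hq hq0 i
  · intro i
    rw [hee i]
    exact TaftAux.taft_hpow_E_ne hq hq0 hnk hn i
  · intro i
    have hli : LinearIndependent k (fun j : Fin n => TaftAux.uu k q n (i, j)) :=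
      (TaftAux.uu_indep hq hq0 hnk).comp (fun j => (i, j))
        (fun a b hab => congrArg Prod.snd hab)
    have hr := TaftAux.taft_range_eq hq hq0 hnk hn i
    rw [hee i]
    refine ⟨(Module.Basis.span hli).map (LinearEquiv.ofEq _ _ hr.symm), ?_, ?_⟩
    · intro j
      have hcoe : ∀ j : Fin n,
          ((((Module.Basis.span hli).map (LinearEquiv.ofEq _ _ hr.symm)) j : _)
            : TaftAlgebra k q n) = TaftAux.uu k q n (i, j) := fun j => by
        rw [Module.Basis.map_apply, LinearEquiv.coe_ofEq_apply, Module.Basis.span_apply]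
      rw [hcoe j]
      exact TaftAux.taft_g_mul_uu hq hq0 (i, j)
    · intro j
      have hcoe : ∀ j : Fin n,
          ((((Module.Basis.span hli).map (LinearEquiv.ofEq _ _ hr.symm)) j : _)
            : TaftAlgebra k q n) = TaftAux.uu k q n (i, j) := fun j => by
        rw [Module.Basis.map_apply, LinearEquiv.coe_ofEq_apply, Module.Basis.span_apply]
      simp only [hcoe]
      exact TaftAux.taft_h_mul_uu (i, j)
  · refine ⟨Module.Basis.mk (TaftAux.uu_indep hq hq0 hnk)
      (TaftAux.taft_top_le_span hq hq0 hnk hn), ?_, ?_⟩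
    · intro p
      rw [Module.Basis.mk_apply]
      exact TaftAux.taft_g_mul_uu hq hq0 p
    · intro p
      simp only [Module.Basis.mk_apply]
      exact TaftAux.taft_h_mul_uu p
end
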